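/- arXiv:1808.04964 — 3 statements merged into one kernel-verified Lean document; each statement's English description precedes it below -/
import Mathlib

section
/- (Regenerative decomposition, equation (9) of the paper.) For each n ≥ 1, let d_n = ∑_{y∈S} B^{n-1}(z,y) − ∑_{y∈S} B^n(z,y) (the probability that the killed chain started at z is killed exactly at time n), and let h_n = (∑_{y∈S} g_{n-1}(y) − ∑_{y∈S} g_n(y)) − f_n(z) (the probability that the chain started at z is killed exactly at time n without ever having returned to z). Then for every n ≥ 1, the convolution identity d_n = ∑_{k=1}^{n-1} f_k(z)·d_{n-k} + h_n holds; consequently, for every γ ∈ ℝ, the identity ∑_{n≥1} e^{γn}·d_n = (∑_{n≥1} e^{γn}·f_n(z))·(∑_{n≥1} e^{γn}·d_n) + ∑_{n≥1} e^{γn}·h_n holds in [0, ∞] (all terms nonnegative, with the convention 0·∞ = 0). -/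
/-- Matrix powers: `B^0 = I`, `B^{n+1}(x,y) = ∑_w B^n(x,w) B(w,y)`. -/
noncomputable def matPow {S : Type*} [DecidableEq S] (B : S → S → ℝ) : ℕ → S → S → ℝ
  | 0 => fun x y => if x = y then (1 : ℝ) else 0
  | n + 1 => fun x y => ∑' w, matPow B n x w * B w y

/-- First-return quantities: `fret B z n x` is the probability that the killed chain
with sub-stochastic transition matrix `B`, started at `x`, first hits `z` at time `n`
without having been killed: `f_1(x) = B(x,z)`, `f_{n+1}(x) = ∑_{w ≠ z} B(x,w) f_n(w)`.
(The value at `n = 0` is set to `0` by convention.) -/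
noncomputable def fret {S : Type*} [DecidableEq S] (B : S → S → ℝ) (z : S) : ℕ → S → ℝ
  | 0 => fun _ => 0
  | 1 => fun x => B x z
  | n + 2 => fun x => ∑' w, if w = z then 0 else B x w * fret B z (n + 1) w

/-- `grow B z j y` is the probability that the killed chain started at `z` is at `y`
at time `j` without having been killed or having returned to `z`:
`g_0 = δ_z`, and for `j ≥ 1`, `g_j(z) = 0` and `g_j(y) = ∑_x g_{j-1}(x) B(x,y)` for `y ≠ z`. -/
noncomputable def grow {S : Type*} [DecidableEq S] (B : S → S → ℝ) (z : S) : ℕ → S → ℝ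
  | 0 => fun y => if y = z then 1 else 0
  | j + 1 => fun y => if y = z then 0 else ∑' x, grow B z j x * B x y

/-- The Perron-Frobenius column eigenvector candidate
`u*(x) = ∑_{n ≥ 1} e^{θ n} f_n(x)`. -/
noncomputable def uStar {S : Type*} [DecidableEq S] (B : S → S → ℝ) (z : S) (θ : ℝ)
    (x : S) : ℝ :=
  ∑' n : ℕ, Real.exp (θ * ((n : ℝ) + 1)) * fret B z (n + 1) x

/-- The Perron-Frobenius row eigenvector candidate
`η*(y) = ∑_{j ≥ 0} e^{θ j} g_j(y)`. -/
noncomputable def etaStar {S : Type*} [DecidableEq S] (B : S → S → ℝ) (z : S) (θ : ℝ)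
    (y : S) : ℝ :=
  ∑' j : ℕ, Real.exp (θ * (j : ℝ)) * grow B z j y

/-- `survD B z n` (for `n ≥ 1`) is the probability that the killed chain started at `z`
is killed exactly at time `n`: `d_n = ∑_y B^{n-1}(z,y) - ∑_y B^n(z,y)`. -/
noncomputable def survD {S : Type*} [DecidableEq S] (B : S → S → ℝ) (z : S) (n : ℕ) : ℝ :=
  (∑' y, matPow B (n - 1) z y) - ∑' y, matPow B n z y

/-- `survH B z n` (for `n ≥ 1`) is the probability that the chain started at `z` is killed
exactly at time `n` without ever having returned to `z`:
`h_n = (∑_y g_{n-1}(y) - ∑_y g_n(y)) - f_n(z)`. -/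
noncomputable def survH {S : Type*} [DecidableEq S] (B : S → S → ℝ) (z : S) (n : ℕ) : ℝ :=
  ((∑' y, grow B z (n - 1) y) - ∑' y, grow B z n y) - fret B z n z

section Aux

open Finset

variable {S : Type*} [DecidableEq S]

/-- Swap of iterated `tsum`s for nonnegative real families, with summability conclusions. -/
lemma swap_nn {α β : Type*} {f : α → β → ℝ}
    (h0 : ∀ a b, 0 ≤ f a b) (h1 : ∀ a, Summable (f a))
    (h2 : Summable (fun a => ∑' b, f a b)) :
    (∀ b, Summable (fun a => f a b)) ∧ Summable (fun b => ∑' a, f a b) ∧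
      (∑' a, ∑' b, f a b) = ∑' b, ∑' a, f a b := by
  have hs : Summable (fun p : α × β => f p.1 p.2) :=
    (summable_prod_of_nonneg (fun p => h0 p.1 p.2)).2 ⟨h1, h2⟩
  have hs2 : Summable (fun p : β × α => f p.2 p.1) := by
    have := (Equiv.prodComm β α).summable_iff.mpr hs
    exact this
  obtain ⟨hb, hbs⟩ := (summable_prod_of_nonneg (fun p : β × α => h0 p.2 p.1)).1 hs2
  exact ⟨hb, hbs, (Summable.tsum_comm' hs h1 hb).symm⟩

lemma tsum_delta_mul (f : S → ℝ) (z : S) :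
    ∑' x, (if x = z then (1 : ℝ) else 0) * f x = f z := by
  have h : ∀ x, (if x = z then (1 : ℝ) else 0) * f x = if x = z then f z else 0 := by
    intro x; by_cases h : x = z <;> simp [h]
  rw [tsum_congr h, tsum_ite_eq]

lemma tsum_delta_mul' (f : S → ℝ) (z : S) :
    ∑' x, (if z = x then (1 : ℝ) else 0) * f x = f z := by
  rw [show (fun x => (if z = x then (1:ℝ) else 0) * f x)
      = fun x => (if x = z then (1:ℝ) else 0) * f x by
    funext x; by_cases h : x = z
    · simp [h]
    · simp [h, Ne.symm h]]
  exact tsum_delta_mul f z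

variable {B : S → S → ℝ} {z : S}

lemma B_le_one (hnn : ∀ x y, 0 ≤ B x y) (hrow : ∀ x, Summable (fun y => B x y))
    (hsub : ∀ x, ∑' y, B x y ≤ 1) (x y : S) : B x y ≤ 1 :=
  le_trans (Summable.le_tsum (hrow x) y (fun j _ => hnn x j)) (hsub x)

/-- The main "row multiplication" helper. -/
lemma row_mul (hnn : ∀ x y, 0 ≤ B x y) (hrow : ∀ x, Summable (fun y => B x y))
    (hsub : ∀ x, ∑' y, B x y ≤ 1)
    {p : S → ℝ} (hp0 : ∀ w, 0 ≤ p w) (hps : Summable p)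
    {b : S → S → ℝ} (hb0 : ∀ w y, 0 ≤ b w y) (hble : ∀ w y, b w y ≤ B w y) :
    (∀ y, Summable fun w => p w * b w y) ∧ Summable (fun y => ∑' w, p w * b w y) ∧
      ((∑' y, ∑' w, p w * b w y) = ∑' w, p w * ∑' y, b w y) ∧
      (∑' y, ∑' w, p w * b w y) ≤ ∑' w, p w := by
  have hbs : ∀ w, Summable (b w) :=
    fun w => Summable.of_nonneg_of_le (hb0 w) (hble w) (hrow w)
  have hbsum : ∀ w, ∑' y, b w y ≤ 1 :=
    fun w => le_trans (Summable.tsum_le_tsum (hble w) (hbs w) (hrow w)) (hsub w)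
  have h0 : ∀ w y, 0 ≤ p w * b w y := fun w y => mul_nonneg (hp0 w) (hb0 w y)
  have h1 : ∀ w, Summable (fun y => p w * b w y) := fun w => (hbs w).mul_left (p w)
  have hin : ∀ w, (∑' y, p w * b w y) = p w * ∑' y, b w y := fun w => tsum_mul_left
  have h2 : Summable (fun w => ∑' y, p w * b w y) := by
    apply Summable.of_nonneg_of_le (fun w => tsum_nonneg (h0 w)) _ hps
    intro w
    rw [hin w]
    calc p w * ∑' y, b w y ≤ p w * 1 := by
          exact mul_le_mul_of_nonneg_left (hbsum w) (hp0 w)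
      _ = p w := mul_one _
  obtain ⟨hc1, hc2, hc3⟩ := swap_nn h0 h1 h2
  refine ⟨hc1, hc2, ?_, ?_⟩
  · rw [← hc3]; exact tsum_congr hin
  · rw [← hc3, tsum_congr hin]
    apply Summable.tsum_le_tsum _ _ hps
    · intro w
      calc p w * ∑' y, b w y ≤ p w * 1 :=
            mul_le_mul_of_nonneg_left (hbsum w) (hp0 w)
        _ = p w := mul_one _
    · apply Summable.of_nonneg_of_le
          (fun w => mul_nonneg (hp0 w) (tsum_nonneg (hb0 w))) _ hps
      intro w
      calc p w * ∑' y, b w y ≤ p w * 1 :=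
            mul_le_mul_of_nonneg_left (hbsum w) (hp0 w)
        _ = p w := mul_one _

end Aux

section Aux2

open Finset

variable {S : Type*} [DecidableEq S] {B : S → S → ℝ} {z : S}

lemma matPow_succ (n : ℕ) (x y : S) :
    matPow B (n + 1) x y = ∑' w, matPow B n x w * B w y := rfl

lemma matPow_zero (x y : S) : matPow B 0 x y = if x = y then (1 : ℝ) else 0 := rfl

lemma fret_one (x : S) : fret B z 1 x = B x z := rfl

lemma fret_succ_succ (n : ℕ) (x : S) :
    fret B z (n + 2) x = ∑' w, if w = z then 0 else B x w * fret B z (n + 1) w := rfl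

lemma grow_zero (y : S) : grow B z 0 y = if y = z then (1 : ℝ) else 0 := rfl

lemma grow_succ (j : ℕ) (y : S) :
    grow B z (j + 1) y = if y = z then 0 else ∑' x, grow B z j x * B x y := rfl

lemma matPow_nonneg (hnn : ∀ x y, 0 ≤ B x y) : ∀ n (x y : S), 0 ≤ matPow B n x y := by
  intro n
  induction n with
  | zero => intro x y; rw [matPow_zero]; positivity
  | succ m ih =>
    intro x y
    rw [matPow_succ]
    exact tsum_nonneg fun w => mul_nonneg (ih x w) (hnn w y)

lemma grow_nonneg (hnn : ∀ x y, 0 ≤ B x y) : ∀ j (y : S), 0 ≤ grow B z j y := by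
  intro j
  induction j with
  | zero => intro y; rw [grow_zero]; positivity
  | succ m ih =>
    intro y
    rw [grow_succ]
    by_cases h : y = z
    · simp [h]
    · simp only [h, if_false]
      exact tsum_nonneg fun w => mul_nonneg (ih w) (hnn w y)

lemma fret_nonneg (hnn : ∀ x y, 0 ≤ B x y) : ∀ n (x : S), 0 ≤ fret B z n x := by
  intro n
  induction n with
  | zero => intro x; simp [fret]
  | succ m ih =>
    match m with
    | 0 => intro x; rw [fret_one]; exact hnn x z
    | k + 1 =>
      intro x
      rw [fret_succ_succ]
      refine tsum_nonneg fun w => ?_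
      by_cases h : w = z
      · simp [h]
      · simp only [h, if_false]
        exact mul_nonneg (hnn x w) (ih w)

lemma fret_le_one (hnn : ∀ x y, 0 ≤ B x y) (hrow : ∀ x, Summable (fun y => B x y))
    (hsub : ∀ x, ∑' y, B x y ≤ 1) : ∀ n (x : S), fret B z n x ≤ 1 := by
  intro n
  induction n with
  | zero => intro x; simp [fret]
  | succ m ih =>
    match m with
    | 0 => intro x; rw [fret_one]; exact B_le_one hnn hrow hsub x z
    | k + 1 =>
      intro x
      rw [fret_succ_succ]
      have hb : ∀ w, (if w = z then 0 else B x w * fret B z (k + 1) w) ≤ B x w := by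
        intro w
        by_cases h : w = z
        · simp [h, hnn]
        · simp only [h, if_false]
          calc B x w * fret B z (k + 1) w ≤ B x w * 1 :=
                mul_le_mul_of_nonneg_left (ih w) (hnn x w)
            _ = B x w := mul_one _
      have hnn' : ∀ w, 0 ≤ (if w = z then 0 else B x w * fret B z (k + 1) w) := by
        intro w
        by_cases h : w = z
        · simp [h]
        · simp only [h, if_false]
          exact mul_nonneg (hnn x w) (fret_nonneg hnn _ w)
      have hs : Summable (fun w => if w = z then 0 else B x w * fret B z (k + 1) w) :=
        Summable.of_nonneg_of_le hnn' hb (hrow x)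
      exact le_trans (Summable.tsum_le_tsum hb hs (hrow x)) (hsub x)

lemma fret_summand_summable (hnn : ∀ x y, 0 ≤ B x y)
    (hrow : ∀ x, Summable (fun y => B x y)) (hsub : ∀ x, ∑' y, B x y ≤ 1) (n : ℕ) (x : S) :
    Summable (fun w => if w = z then 0 else B x w * fret B z n w) := by
  apply Summable.of_nonneg_of_le _ _ (hrow x)
  · intro w
    by_cases h : w = z
    · simp [h]
    · simp only [h, if_false]; exact mul_nonneg (hnn x w) (fret_nonneg hnn _ w)
  · intro w
    by_cases h : w = z
    · simp [h, hnn]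
    · simp only [h, if_false]
      calc B x w * fret B z n w ≤ B x w * 1 :=
            mul_le_mul_of_nonneg_left (fret_le_one hnn hrow hsub n w) (hnn x w)
        _ = B x w := mul_one _

lemma matPow_zero_summable (x : S) : Summable (fun y => matPow B 0 x y) := by
  apply summable_of_ne_finset_zero (s := {x})
  intro y hy
  rw [matPow_zero, if_neg]
  intro h; exact hy (by simp [h])

lemma matPow_zero_sum (x : S) : ∑' y, matPow B 0 x y = 1 := by
  simp only [matPow_zero]
  rw [show (fun y => if x = y then (1:ℝ) else 0) = fun y => if y = x then (1:ℝ) else 0 by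
    funext y; by_cases h : y = x
    · simp [h]
    · simp [h, Ne.symm h]]
  exact tsum_ite_eq x 1

lemma matPow_summable (hnn : ∀ x y, 0 ≤ B x y) (hrow : ∀ x, Summable (fun y => B x y))
    (hsub : ∀ x, ∑' y, B x y ≤ 1) : ∀ n (x : S), Summable (fun y => matPow B n x y) := by
  intro n
  induction n with
  | zero => exact matPow_zero_summable
  | succ m ih =>
    intro x
    have h := (row_mul hnn hrow hsub (matPow_nonneg hnn m x) (ih x)
      (fun w y => hnn w y) (fun w y => le_refl _)).2.1
    exact h

lemma matPow_sum_mono (hnn : ∀ x y, 0 ≤ B x y) (hrow : ∀ x, Summable (fun y => B x y))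
    (hsub : ∀ x, ∑' y, B x y ≤ 1) (n : ℕ) (x : S) :
    ∑' y, matPow B (n + 1) x y ≤ ∑' y, matPow B n x y := by
  have h := (row_mul hnn hrow hsub (matPow_nonneg hnn n x)
    (matPow_summable hnn hrow hsub n x) (fun w y => hnn w y) (fun w y => le_refl _)).2.2.2
  exact h

lemma matPow_sum_le_one (hnn : ∀ x y, 0 ≤ B x y) (hrow : ∀ x, Summable (fun y => B x y))
    (hsub : ∀ x, ∑' y, B x y ≤ 1) : ∀ n (x : S), ∑' y, matPow B n x y ≤ 1 := by
  intro n
  induction n with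
  | zero => intro x; rw [matPow_zero_sum]
  | succ m ih => intro x; exact le_trans (matPow_sum_mono hnn hrow hsub m x) (ih x)

lemma grow_succ' (j : ℕ) (y : S) :
    grow B z (j + 1) y = ∑' x, grow B z j x * (if y = z then 0 else B x y) := by
  rw [grow_succ]
  by_cases h : y = z
  · simp [h]
  · simp [h]

lemma grow_summable_sum (hnn : ∀ x y, 0 ≤ B x y) (hrow : ∀ x, Summable (fun y => B x y))
    (hsub : ∀ x, ∑' y, B x y ≤ 1) :
    ∀ j, Summable (fun y => grow B z j y) ∧ ∑' y, grow B z j y ≤ 1 := by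
  intro j
  induction j with
  | zero =>
    constructor
    · apply summable_of_ne_finset_zero (s := {z})
      intro y hy
      rw [grow_zero, if_neg]
      intro h; exact hy (by simp [h])
    · simp only [grow_zero]
      rw [tsum_ite_eq z (fun _ => (1:ℝ))]
  | succ m ih =>
    have hb0 : ∀ (x y : S), 0 ≤ (if y = z then 0 else B x y) := by
      intro x y; by_cases h : y = z <;> simp [h, hnn]
    have hble : ∀ (x y : S), (if y = z then 0 else B x y) ≤ B x y := by
      intro x y; by_cases h : y = z <;> simp [h, hnn]
    have h := row_mul hnn hrow hsub (grow_nonneg hnn m) ih.1 hb0 hble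
    constructor
    · rw [show (fun y => grow B z (m+1) y) = fun y => ∑' x, grow B z m x * (if y = z then 0 else B x y) by
        funext y; exact grow_succ' m y]
      exact h.2.1
    · calc ∑' y, grow B z (m + 1) y
          = ∑' y, ∑' x, grow B z m x * (if y = z then 0 else B x y) :=
            tsum_congr fun y => grow_succ' m y
        _ ≤ ∑' x, grow B z m x := h.2.2.2
        _ ≤ 1 := ih.2

lemma grow_summable (hnn : ∀ x y, 0 ≤ B x y) (hrow : ∀ x, Summable (fun y => B x y))
    (hsub : ∀ x, ∑' y, B x y ≤ 1) (j : ℕ) : Summable (fun y => grow B z j y) :=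
  (grow_summable_sum hnn hrow hsub j).1

end Aux2

section Aux3

open Finset

variable {S : Type*} [DecidableEq S] {B : S → S → ℝ} {z : S}

lemma T_shift (hnn : ∀ x y, 0 ≤ B x y) (hrow : ∀ x, Summable (fun y => B x y))
    (hsub : ∀ x, ∑' y, B x y ≤ 1) :
    ∀ n j, ∑' x, grow B z j x * fret B z (n + 1) x = ∑' x, grow B z (j + n) x * B x z := by
  intro n
  induction n with
  | zero =>
    intro j
    rw [show (0:ℕ) + 1 = 1 from rfl, Nat.add_zero]
    exact tsum_congr fun x => by rw [fret_one]
  | succ m ih =>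
    intro j
    set F : S → S → ℝ :=
      fun x w => grow B z j x * (if w = z then 0 else B x w * fret B z (m + 1) w) with hF
    have h0 : ∀ x w, 0 ≤ F x w := by
      intro x w
      apply mul_nonneg (grow_nonneg hnn j x)
      by_cases h : w = z
      · simp [h]
      · simp only [h, if_false]; exact mul_nonneg (hnn x w) (fret_nonneg hnn _ w)
    have h1 : ∀ x, Summable (F x) :=
      fun x => (fret_summand_summable hnn hrow hsub (m + 1) x).mul_left _
    have hin : ∀ x, (∑' w, F x w) = grow B z j x * fret B z (m + 2) x := by
      intro x; rw [hF]; rw [tsum_mul_left, fret_succ_succ]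
    have h2 : Summable fun x => ∑' w, F x w := by
      refine Summable.of_nonneg_of_le (fun x => tsum_nonneg (h0 x)) (fun x => ?_)
        (grow_summable (z := z) hnn hrow hsub j)
      rw [hin x]
      calc grow B z j x * fret B z (m + 2) x ≤ grow B z j x * 1 :=
            mul_le_mul_of_nonneg_left (fret_le_one hnn hrow hsub _ x) (grow_nonneg hnn j x)
        _ = grow B z j x := mul_one _
    obtain ⟨hc1, hc2, hc3⟩ := swap_nn h0 h1 h2
    have inner : ∀ w, (∑' x, F x w) = grow B z (j + 1) w * fret B z (m + 1) w := by
      intro w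
      by_cases h : w = z
      · have e1 : ∀ x, F x w = 0 := by
          intro x; rw [hF]; simp [h]
        rw [tsum_congr e1, tsum_zero, grow_succ, if_pos h, zero_mul]
      · have heq : ∀ x, F x w = (grow B z j x * B x w) * fret B z (m + 1) w := by
          intro x; rw [hF]; simp only [h, if_false]; ring
        rw [tsum_congr heq, tsum_mul_right, grow_succ, if_neg h]
    calc ∑' x, grow B z j x * fret B z (m + 1 + 1) x
        = ∑' x, ∑' w, F x w := tsum_congr fun x => (hin x).symm
      _ = ∑' w, ∑' x, F x w := hc3
      _ = ∑' w, grow B z (j + 1) w * fret B z (m + 1) w := tsum_congr inner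
      _ = ∑' x, grow B z (j + 1 + m) x * B x z := ih (j + 1)
      _ = ∑' x, grow B z (j + (m + 1)) x * B x z := by
          rw [show j + 1 + m = j + (m + 1) by omega]

lemma fret_grow (hnn : ∀ x y, 0 ≤ B x y) (hrow : ∀ x, Summable (fun y => B x y))
    (hsub : ∀ x, ∑' y, B x y ≤ 1) (n : ℕ) :
    fret B z (n + 1) z = ∑' x, grow B z n x * B x z := by
  have h0 : fret B z (n + 1) z = ∑' x, grow B z 0 x * fret B z (n + 1) x := by
    simp only [grow_zero]
    exact (tsum_delta_mul (fret B z (n + 1)) z).symm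
  rw [h0, T_shift hnn hrow hsub n 0, Nat.zero_add]

/-- Main pointwise decomposition by first return time. -/
lemma decomp (hnn : ∀ x y, 0 ≤ B x y) (hrow : ∀ x, Summable (fun y => B x y))
    (hsub : ∀ x, ∑' y, B x y ≤ 1) :
    ∀ n, 1 ≤ n → ∀ y, matPow B n z y
      = (∑ k ∈ Finset.Ico 1 (n + 1), fret B z k z * matPow B (n - k) z y) + grow B z n y := by
  intro n
  induction n with
  | zero => omega
  | succ m ih =>
    intro _ y
    by_cases hm : m = 0
    · subst hm
      have lhs : matPow B 1 z y = B z y := by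
        rw [matPow_succ]
        simp only [matPow_zero]
        exact tsum_delta_mul' (fun w => B w y) z
      rw [lhs]
      rw [show Finset.Ico 1 (0 + 1 + 1) = {1} from rfl, Finset.sum_singleton, fret_one]
      simp only [Nat.sub_self, matPow_zero, grow_succ]
      by_cases h : y = z
      · rw [if_pos h.symm, if_pos h, mul_one, add_zero, h]
      · rw [if_neg (fun hh : z = y => h hh.symm), if_neg h, mul_zero, zero_add]
        simp only [grow_zero]
        exact (tsum_delta_mul (fun x => B x y) z).symm
    · have hm1 : 1 ≤ m := by omega
      have ihm := ih hm1
      have hnnk : ∀ k w, 0 ≤ fret B z k z * matPow B (m - k) z w :=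
        fun k w => mul_nonneg (fret_nonneg hnn _ _) (matPow_nonneg hnn _ _ _)
      have hSk : ∀ k ∈ Finset.Ico 1 (m + 1),
          Summable (fun w => (fret B z k z * matPow B (m - k) z w) * B w y) := by
        intro k _
        refine Summable.of_nonneg_of_le
          (fun w => mul_nonneg (hnnk k w) (hnn w y)) (fun w => ?_)
          ((matPow_summable hnn hrow hsub (m - k) z).mul_left (fret B z k z))
        calc (fret B z k z * matPow B (m - k) z w) * B w y
            ≤ (fret B z k z * matPow B (m - k) z w) * 1 :=
              mul_le_mul_of_nonneg_left (B_le_one hnn hrow hsub w y) (hnnk k w)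
          _ = fret B z k z * matPow B (m - k) z w := mul_one _
      have hSA : Summable (fun w =>
          (∑ k ∈ Finset.Ico 1 (m + 1), fret B z k z * matPow B (m - k) z w) * B w y) := by
        simp only [Finset.sum_mul]
        exact summable_sum hSk
      have hSg : Summable (fun w => grow B z m w * B w y) := by
        refine Summable.of_nonneg_of_le
          (fun w => mul_nonneg (grow_nonneg hnn m w) (hnn w y)) (fun w => ?_)
          (grow_summable (z := z) hnn hrow hsub m)
        calc grow B z m w * B w y ≤ grow B z m w * 1 :=
              mul_le_mul_of_nonneg_left (B_le_one hnn hrow hsub w y) (grow_nonneg hnn m w)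
          _ = grow B z m w := mul_one _
      have main : matPow B (m + 1) z y
          = (∑ k ∈ Finset.Ico 1 (m + 1), fret B z k z * matPow B (m + 1 - k) z y)
            + ∑' w, grow B z m w * B w y := by
        rw [matPow_succ]
        calc ∑' w, matPow B m z w * B w y
            = ∑' w, ((∑ k ∈ Finset.Ico 1 (m + 1), fret B z k z * matPow B (m - k) z w) * B w y
                + grow B z m w * B w y) := by
              refine tsum_congr fun w => ?_
              rw [ihm w, add_mul]
          _ = (∑' w, (∑ k ∈ Finset.Ico 1 (m + 1), fret B z k z * matPow B (m - k) z w) * B w y)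
                + ∑' w, grow B z m w * B w y := Summable.tsum_add hSA hSg
          _ = (∑ k ∈ Finset.Ico 1 (m + 1), fret B z k z * matPow B (m + 1 - k) z y)
                + ∑' w, grow B z m w * B w y := by
              congr 1
              calc ∑' w, (∑ k ∈ Finset.Ico 1 (m + 1), fret B z k z * matPow B (m - k) z w) * B w y
                  = ∑' w, ∑ k ∈ Finset.Ico 1 (m + 1),
                      (fret B z k z * matPow B (m - k) z w) * B w y := by
                    refine tsum_congr fun w => ?_; rw [Finset.sum_mul]
                _ = ∑ k ∈ Finset.Ico 1 (m + 1),
                      ∑' w, (fret B z k z * matPow B (m - k) z w) * B w y := Summable.tsum_finsetSum hSk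
                _ = ∑ k ∈ Finset.Ico 1 (m + 1), fret B z k z * matPow B (m + 1 - k) z y := by
                    refine Finset.sum_congr rfl fun k hk => ?_
                    have hk' : k ≤ m := by
                      have := Finset.mem_Ico.1 hk; omega
                    have harith : m - k + 1 = m + 1 - k := by omega
                    simp only [mul_assoc]
                    rw [tsum_mul_left]
                    congr 1
                    rw [← matPow_succ, harith]
      rw [Finset.sum_Ico_succ_top (show 1 ≤ m + 1 by omega), main]
      by_cases h : y = z
      · subst h
        rw [show m + 1 - (m + 1) = 0 by omega]
        rw [matPow_zero, if_pos rfl, mul_one, grow_succ, if_pos rfl, add_zero]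
        rw [← fret_grow hnn hrow hsub m]
      · rw [show m + 1 - (m + 1) = 0 by omega]
        rw [matPow_zero, if_neg (fun hh : z = y => h hh.symm), mul_zero, add_zero]
        rw [grow_succ, if_neg h]

end Aux3

section Aux4

open Finset

variable {S : Type*} [DecidableEq S] {B : S → S → ℝ} {z : S}

lemma sum_decomp (hnn : ∀ x y, 0 ≤ B x y) (hrow : ∀ x, Summable (fun y => B x y))
    (hsub : ∀ x, ∑' y, B x y ≤ 1) (n : ℕ) :
    ∑' y, matPow B n z y
      = (∑ k ∈ Finset.Ico 1 (n + 1), fret B z k z * ∑' y, matPow B (n - k) z y)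
        + ∑' y, grow B z n y := by
  by_cases hn : n = 0
  · subst hn
    rw [show Finset.Ico 1 1 = (∅ : Finset ℕ) from rfl, Finset.sum_empty, zero_add]
    rw [matPow_zero_sum]
    simp only [grow_zero]
    rw [tsum_ite_eq z (fun _ => (1 : ℝ))]
  · have hn1 : 1 ≤ n := by omega
    have hSk : ∀ k ∈ Finset.Ico 1 (n + 1),
        Summable (fun y => fret B z k z * matPow B (n - k) z y) :=
      fun k _ => (matPow_summable hnn hrow hsub (n - k) z).mul_left _
    calc ∑' y, matPow B n z y
        = ∑' y, ((∑ k ∈ Finset.Ico 1 (n + 1), fret B z k z * matPow B (n - k) z y)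
            + grow B z n y) := tsum_congr fun y => decomp hnn hrow hsub n hn1 y
      _ = (∑' y, ∑ k ∈ Finset.Ico 1 (n + 1), fret B z k z * matPow B (n - k) z y)
            + ∑' y, grow B z n y :=
          Summable.tsum_add (summable_sum hSk) (grow_summable (z := z) hnn hrow hsub n)
      _ = (∑ k ∈ Finset.Ico 1 (n + 1), ∑' y, fret B z k z * matPow B (n - k) z y)
            + ∑' y, grow B z n y := by rw [Summable.tsum_finsetSum hSk]
      _ = (∑ k ∈ Finset.Ico 1 (n + 1), fret B z k z * ∑' y, matPow B (n - k) z y)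
            + ∑' y, grow B z n y := by
          congr 1
          exact Finset.sum_congr rfl fun k _ => tsum_mul_left

/-- Part (1): the convolution identity. -/
lemma part_one (hnn : ∀ x y, 0 ≤ B x y) (hrow : ∀ x, Summable (fun y => B x y))
    (hsub : ∀ x, ∑' y, B x y ≤ 1) (n : ℕ) (hn : 1 ≤ n) :
    survD B z n = (∑ k ∈ Finset.Ico 1 n, fret B z k z * survD B z (n - k)) + survH B z n := by
  obtain ⟨m, rfl⟩ : ∃ m, n = m + 1 := ⟨n - 1, by omega⟩
  have e1 := sum_decomp (z := z) hnn hrow hsub m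
  have e2 := sum_decomp (z := z) hnn hrow hsub (m + 1)
  rw [Finset.sum_Ico_succ_top (show 1 ≤ m + 1 by omega)] at e2
  rw [show m + 1 - (m + 1) = 0 by omega, matPow_zero_sum, mul_one] at e2
  have hD : survD B z (m + 1) = (∑' y, matPow B m z y) - ∑' y, matPow B (m + 1) z y := by
    rw [survD, Nat.add_sub_cancel]
  have hH : survH B z (m + 1)
      = ((∑' y, grow B z m y) - ∑' y, grow B z (m + 1) y) - fret B z (m + 1) z := by
    rw [survH, Nat.add_sub_cancel]
  have hsum : ∑ k ∈ Finset.Ico 1 (m + 1), fret B z k z * survD B z (m + 1 - k)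
      = (∑ k ∈ Finset.Ico 1 (m + 1), fret B z k z * ∑' y, matPow B (m - k) z y)
        - ∑ k ∈ Finset.Ico 1 (m + 1), fret B z k z * ∑' y, matPow B (m + 1 - k) z y := by
    rw [← Finset.sum_sub_distrib]
    refine Finset.sum_congr rfl fun k hk => ?_
    have hk' : 1 ≤ k ∧ k ≤ m := by
      have := Finset.mem_Ico.1 hk; omega
    rw [survD, show m + 1 - k - 1 = m - k by omega]
    ring
  rw [hD, hH, hsum, e1, e2]
  ring
  
lemma survD_nonneg (hnn : ∀ x y, 0 ≤ B x y) (hrow : ∀ x, Summable (fun y => B x y))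
    (hsub : ∀ x, ∑' y, B x y ≤ 1) (n : ℕ) : 0 ≤ survD B z (n + 1) := by
  rw [survD, Nat.add_sub_cancel, sub_nonneg]
  exact matPow_sum_mono hnn hrow hsub n z

lemma survH_nonneg (hnn : ∀ x y, 0 ≤ B x y) (hrow : ∀ x, Summable (fun y => B x y))
    (hsub : ∀ x, ∑' y, B x y ≤ 1) (n : ℕ) : 0 ≤ survH B z (n + 1) := by
  rw [survH, Nat.add_sub_cancel, sub_nonneg, fret_grow hnn hrow hsub n]
  -- goal : fret term + Gn(n+1) ≤ Gn n, stated as ∑' grow n * B x z ≤ Gn n - Gn (n+1)? 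
  have hg0 := grow_nonneg (z := z) hnn
  have hgs := grow_summable (z := z) hnn hrow hsub
  have hA : ∀ x, 0 ≤ grow B z n x * ((∑' y, B x y) - B x z) := by
    intro x
    apply mul_nonneg (hg0 n x)
    rw [sub_nonneg]
    exact Summable.le_tsum (hrow x) z fun j _ => hnn x j
  have hAle : ∀ x, grow B z n x * ((∑' y, B x y) - B x z) ≤ grow B z n x := by
    intro x
    calc grow B z n x * ((∑' y, B x y) - B x z) ≤ grow B z n x * 1 := by
          apply mul_le_mul_of_nonneg_left _ (hg0 n x)
          have : 0 ≤ ∑' y, B x y := tsum_nonneg (fun y => hnn x y)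
          have h2 := hsub x
          have h3 := hnn x z
          linarith
      _ = grow B z n x := mul_one _
  have hAs : Summable (fun x => grow B z n x * ((∑' y, B x y) - B x z)) :=
    Summable.of_nonneg_of_le hA hAle (hgs n)
  have hCle : ∀ x, grow B z n x * B x z ≤ grow B z n x := by
    intro x
    calc grow B z n x * B x z ≤ grow B z n x * 1 :=
          mul_le_mul_of_nonneg_left (B_le_one hnn hrow hsub x z) (hg0 n x)
      _ = grow B z n x := mul_one _
  have hCs : Summable (fun x => grow B z n x * B x z) :=
    Summable.of_nonneg_of_le (fun x => mul_nonneg (hg0 n x) (hnn x z)) hCle (hgs n)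
  -- compute Gn (n+1)
  have hb0 : ∀ (x y : S), 0 ≤ (if y = z then 0 else B x y) := by
    intro x y; by_cases h : y = z <;> simp [h, hnn]
  have hble : ∀ (x y : S), (if y = z then 0 else B x y) ≤ B x y := by
    intro x y; by_cases h : y = z <;> simp [h, hnn]
  have hrm := row_mul hnn hrow hsub (hg0 n) (hgs n) hb0 hble
  have hG1 : ∑' y, grow B z (n + 1) y
      = ∑' x, grow B z n x * ((∑' y, B x y) - B x z) := by
    calc ∑' y, grow B z (n + 1) y
        = ∑' y, ∑' x, grow B z n x * (if y = z then 0 else B x y) :=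
          tsum_congr fun y => grow_succ' n y
      _ = ∑' x, grow B z n x * ∑' y, (if y = z then 0 else B x y) := hrm.2.2.1
      _ = ∑' x, grow B z n x * ((∑' y, B x y) - B x z) := by
          refine tsum_congr fun x => ?_
          congr 1
          have h4 := Summable.tsum_eq_add_tsum_ite (hrow x) z
          linarith
  have hrow_le : ∀ x, grow B z n x * ∑' y, B x y ≤ grow B z n x := by
    intro x
    calc grow B z n x * ∑' y, B x y ≤ grow B z n x * 1 :=
          mul_le_mul_of_nonneg_left (hsub x) (hg0 n x)
      _ = grow B z n x := mul_one _
  have hRs : Summable (fun x => grow B z n x * ∑' y, B x y) :=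
    Summable.of_nonneg_of_le
      (fun x => mul_nonneg (hg0 n x) (tsum_nonneg fun y => hnn x y)) hrow_le (hgs n)
  have hsplit : (∑' x, grow B z n x * ((∑' y, B x y) - B x z))
      + ∑' x, grow B z n x * B x z = ∑' x, grow B z n x * ∑' y, B x y := by
    rw [← Summable.tsum_add hAs hCs]
    exact tsum_congr fun x => by ring
  have hfin : ∑' x, grow B z n x * ∑' y, B x y ≤ ∑' x, grow B z n x :=
    Summable.tsum_le_tsum hrow_le hRs (hgs n)
  rw [hG1]
  linarith

end Aux4

section Aux5

open Finset

/-- Cauchy-product formula in `ℝ≥0∞`. -/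
lemma ennreal_cauchy (b a : ℕ → ENNReal) :
    (∑' n, b n) * (∑' n, a n)
      = ∑' n, ∑ i ∈ Finset.range (n + 1), b i * a (n - i) := by
  have h1 : (∑' (p : ℕ × ℕ), b p.1 * a p.2) = (∑' n, b n) * (∑' n, a n) := by
    rw [ENNReal.tsum_prod']
    simp_rw [ENNReal.tsum_mul_left]
    rw [ENNReal.tsum_mul_right]
  have h2 : (∑' (p : ℕ × ℕ), b p.1 * a p.2)
      = ∑' n, ∑ kl ∈ Finset.HasAntidiagonal.antidiagonal n, b kl.1 * a kl.2 := by
    rw [← Finset.HasAntidiagonal.sigmaAntidiagonalEquivProd.tsum_eq (fun p : ℕ × ℕ => b p.1 * a p.2)]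
    rw [ENNReal.tsum_sigma']
    refine tsum_congr fun n => ?_
    simp only [Finset.HasAntidiagonal.sigmaAntidiagonalEquivProd_apply]
    rw [Finset.tsum_subtype (Finset.HasAntidiagonal.antidiagonal n) (fun kl => b kl.1 * a kl.2)]
  rw [← h1, h2]
  refine tsum_congr fun n => ?_
  rw [Finset.Nat.sum_antidiagonal_eq_sum_range_succ_mk]

/-- Generic renewal-type identity in `ℝ≥0∞`. -/
lemma conv_tsum (a b c : ℕ → ENNReal)
    (h : ∀ n, a n = (∑ i ∈ Finset.range n, b i * a (n - 1 - i)) + c n) :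
    ∑' n, a n = (∑' n, b n) * (∑' n, a n) + ∑' n, c n := by
  have step1 : ∑' n, a n
      = (∑' n, ∑ i ∈ Finset.range n, b i * a (n - 1 - i)) + ∑' n, c n := by
    rw [← ENNReal.tsum_add]
    exact tsum_congr h
  have step2 : (∑' n, ∑ i ∈ Finset.range n, b i * a (n - 1 - i))
      = ∑' n, ∑ i ∈ Finset.range (n + 1), b i * a (n - i) := by
    rw [tsum_eq_zero_add' ENNReal.summable]
    simp only [Finset.range_zero, Finset.sum_empty, zero_add]
    refine tsum_congr fun n => ?_
    refine Finset.sum_congr rfl fun i hi => ?_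
    rw [show n + 1 - 1 - i = n - i by omega]
  rw [ennreal_cauchy b a, step1, step2]

end Aux5

/-- Regenerative decomposition (equation (9) of the paper): the convolution identity
`d_n = ∑_{k=1}^{n-1} f_k(z) d_{n-k} + h_n` for all `n ≥ 1`, and the resulting
generating-function identity in `[0,∞]` for every `γ ∈ ℝ`. -/
theorem stmt10 {S : Type*} [Countable S] [Nonempty S] [DecidableEq S]
    (B : S → S → ℝ)
    (hnn : ∀ x y, 0 ≤ B x y)
    (hrow : ∀ x, Summable (fun y => B x y))
    (hsub : ∀ x, ∑' y, B x y ≤ 1)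
    (hirr : ∀ x y, ∃ n, 1 ≤ n ∧ 0 < matPow B n x y)
    (z : S) :
    (∀ n, 1 ≤ n →
      survD B z n =
        (∑ k ∈ Finset.Ico 1 n, fret B z k z * survD B z (n - k)) + survH B z n) ∧
    (∀ γ : ℝ,
      (∑' n : ℕ, ENNReal.ofReal (Real.exp (γ * ((n : ℝ) + 1)) * survD B z (n + 1)))
        = (∑' n : ℕ, ENNReal.ofReal (Real.exp (γ * ((n : ℝ) + 1)) * fret B z (n + 1) z))
          * (∑' n : ℕ, ENNReal.ofReal (Real.exp (γ * ((n : ℝ) + 1)) * survD B z (n + 1)))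
          + ∑' n : ℕ, ENNReal.ofReal (Real.exp (γ * ((n : ℝ) + 1)) * survH B z (n + 1))) := by
  
  constructor
  · exact fun n hn => part_one hnn hrow hsub n hn
  · intro γ
    refine conv_tsum
      (fun n => ENNReal.ofReal (Real.exp (γ * ((n : ℝ) + 1)) * survD B z (n + 1)))
      (fun n => ENNReal.ofReal (Real.exp (γ * ((n : ℝ) + 1)) * fret B z (n + 1) z))
      (fun n => ENNReal.ofReal (Real.exp (γ * ((n : ℝ) + 1)) * survH B z (n + 1)))
      (fun n => ?_)
    beta_reduce
    have h1 := part_one (z := z) hnn hrow hsub (n + 1) (by omega)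
    rw [Finset.sum_Ico_eq_sum_range] at h1
    simp only [Nat.add_sub_cancel] at h1
    have hDnn : ∀ i ∈ Finset.range n, 0 ≤ fret B z (1 + i) z * survD B z (n + 1 - (1 + i)) := by
      intro i hi
      have hi' : i < n := Finset.mem_range.1 hi
      refine mul_nonneg (fret_nonneg hnn _ _) ?_
      rw [show n + 1 - (1 + i) = (n - 1 - i) + 1 by omega]
      exact survD_nonneg hnn hrow hsub _
    have hsum_nn : 0 ≤ ∑ i ∈ Finset.range n, fret B z (1 + i) z * survD B z (n + 1 - (1 + i)) :=
      Finset.sum_nonneg hDnn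
    rw [h1, mul_add, ENNReal.ofReal_add
      (mul_nonneg (Real.exp_pos _).le hsum_nn)
      (mul_nonneg (Real.exp_pos _).le (survH_nonneg hnn hrow hsub n))]
    congr 1
    rw [Finset.mul_sum, ENNReal.ofReal_sum_of_nonneg
      (fun i hi => mul_nonneg (Real.exp_pos _).le (hDnn i hi))]
    refine Finset.sum_congr rfl fun i hi => ?_
    have hi' : i < n := Finset.mem_range.1 hi
    set j := n - 1 - i with hj
    have hn' : n = i + j + 1 := by omega
    have hidx : n + 1 - (1 + i) = j + 1 := by omega
    have hexp : Real.exp (γ * ((n : ℝ) + 1))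
        = Real.exp (γ * ((i : ℝ) + 1)) * Real.exp (γ * ((j : ℝ) + 1)) := by
      rw [← Real.exp_add]
      congr 1
      rw [hn']
      push_cast
      ring
    rw [hidx, hexp, show 1 + i = i + 1 from by omega]
    rw [show Real.exp (γ * ((i : ℝ) + 1)) * Real.exp (γ * ((j : ℝ) + 1))
          * (fret B z (i + 1) z * survD B z (j + 1))
        = (Real.exp (γ * ((i : ℝ) + 1)) * fret B z (i + 1) z)
          * (Real.exp (γ * ((j : ℝ) + 1)) * survD B z (j + 1)) from by ring]
    exact ENNReal.ofReal_mul (mul_nonneg (Real.exp_pos _).le (fret_nonneg hnn _ _))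
end

section
/- (Theorem 3.) Define θ₁ = sup{γ ∈ ℝ : ∑_{n≥0} e^{γn}·(∑_{y∈S} B^n(z,y)) < ∞} and θ₂ = sup{γ ∈ ℝ : ∑_{n≥0} e^{γn}·(∑_{y∈S} g_n(y)) < ∞}. If θ₂ > θ₁, then there exists θ ≥ 0 with θ < θ₂ such that ∑_{n≥1} e^{θn}·f_n(z) = 1 (assumption A1) and ∑_{n≥1} n·e^{θn}·f_n(z) < ∞ (assumption A2). -/
set_option linter.unusedSectionVars false
namespace Stmt11Aux
open ENNReal

variable {S : Type*} [DecidableEq S]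

noncomputable def BE (B : S → S → ℝ) : S → S → ℝ≥0∞ := fun x y => ENNReal.ofReal (B x y)

noncomputable def mpE (B : S → S → ℝ) : ℕ → S → S → ℝ≥0∞
  | 0 => fun x y => if x = y then 1 else 0
  | n + 1 => fun x y => ∑' w, mpE B n x w * BE B w y

noncomputable def frE (B : S → S → ℝ) (z : S) : ℕ → S → ℝ≥0∞
  | 0 => fun _ => 0
  | 1 => fun x => BE B x z
  | n + 2 => fun x => ∑' w, if w = z then 0 else BE B x w * frE B z (n + 1) w

noncomputable def grE (B : S → S → ℝ) (z : S) : ℕ → S → ℝ≥0∞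
  | 0 => fun y => if y = z then 1 else 0
  | j + 1 => fun y => if y = z then 0 else ∑' x, grE B z j x * BE B x y

section Core
variable (B : S → S → ℝ) (z : S)

lemma rowE (hnn : ∀ x y, 0 ≤ B x y) (hrow : ∀ x, Summable (fun y => B x y))
    (hsub : ∀ x, ∑' y, B x y ≤ 1) (x : S) : ∑' y, BE B x y ≤ 1 := by
  have : ∑' y, BE B x y = ENNReal.ofReal (∑' y, B x y) :=
    (ENNReal.ofReal_tsum_of_nonneg (hnn x) (hrow x)).symm
  rw [this]
  calc ENNReal.ofReal (∑' y, B x y) ≤ ENNReal.ofReal 1 := ENNReal.ofReal_le_ofReal (hsub x)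
    _ = 1 := by simp

lemma tsum_ite_eq' (x : S) (f : S → ℝ≥0∞) : ∑' y, (if x = y then f y else 0) = f x := by
  rw [tsum_eq_single x]
  · simp
  · intro y hy; simp [Ne.symm hy]

lemma tsum_ite_eq'' (x : S) (f : S → ℝ≥0∞) : ∑' y, (if y = x then f y else 0) = f x := by
  rw [tsum_eq_single x]
  · simp
  · intro y hy; simp [hy]

lemma mpE_row (hB : ∀ x, ∑' y, BE B x y ≤ 1) (n : ℕ) (x : S) : ∑' y, mpE B n x y ≤ 1 := by
  induction n generalizing x with
  | zero => simp [mpE, tsum_ite_eq' x (fun _ => (1:ℝ≥0∞))]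
  | succ n ih =>
    have : ∑' y, mpE B (n+1) x y = ∑' w, mpE B n x w * ∑' y, BE B w y := by
      simp only [mpE]
      rw [ENNReal.tsum_comm]
      exact tsum_congr fun w => ENNReal.tsum_mul_left
    rw [this]
    calc ∑' w, mpE B n x w * ∑' y, BE B w y ≤ ∑' w, mpE B n x w * 1 :=
          ENNReal.tsum_le_tsum fun w => mul_le_mul_right (hB w) _
      _ = ∑' w, mpE B n x w := by simp
      _ ≤ 1 := ih x

lemma grE_row (hB : ∀ x, ∑' y, BE B x y ≤ 1) (n : ℕ) : ∑' y, grE B z n y ≤ 1 := by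
  induction n with
  | zero => simp [grE, tsum_ite_eq'' z (fun _ => (1:ℝ≥0∞))]
  | succ n ih =>
    have h1 : ∑' y, grE B z (n+1) y ≤ ∑' y, ∑' x, grE B z n x * BE B x y := by
      apply ENNReal.tsum_le_tsum
      intro y
      simp only [grE]
      split <;> simp
    calc ∑' y, grE B z (n+1) y ≤ ∑' y, ∑' x, grE B z n x * BE B x y := h1
      _ = ∑' x, grE B z n x * ∑' y, BE B x y := by
          rw [ENNReal.tsum_comm]; exact tsum_congr fun x => ENNReal.tsum_mul_left
      _ ≤ ∑' x, grE B z n x * 1 := ENNReal.tsum_le_tsum fun x => mul_le_mul_right (hB x) _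
      _ ≤ 1 := by simpa using ih

lemma swapT (j m : ℕ) :
    ∑' y, grE B z j y * frE B z (m+2) y = ∑' y, grE B z (j+1) y * frE B z (m+1) y := by
  calc ∑' y, grE B z j y * frE B z (m+2) y
      = ∑' y, ∑' w, grE B z j y * (if w = z then 0 else BE B y w * frE B z (m+1) w) := by
        refine tsum_congr fun y => ?_
        simp only [frE]
        exact ENNReal.tsum_mul_left.symm
    _ = ∑' w, ∑' y, grE B z j y * (if w = z then 0 else BE B y w * frE B z (m+1) w) :=
        ENNReal.tsum_comm
    _ = ∑' w, grE B z (j+1) w * frE B z (m+1) w := by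
        refine tsum_congr fun w => ?_
        by_cases hw : w = z
        · simp [hw, grE]
        · simp only [hw, if_false, grE]
          rw [← ENNReal.tsum_mul_right]
          exact tsum_congr fun y => (mul_assoc _ _ _).symm

lemma T_shift (m : ℕ) : ∀ j, ∑' y, grE B z j y * frE B z (m+1) y
    = ∑' y, grE B z (j+m) y * frE B z 1 y := by
  induction m with
  | zero => intro j; simp
  | succ m ih =>
    intro j
    rw [swapT B z j m, ih (j+1), show j+1+m = j+(m+1) from by omega]

lemma frE_grE (n : ℕ) : frE B z (n+1) z = ∑' y, grE B z n y * BE B y z := by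
  have h0 : frE B z (n+1) z = ∑' y, grE B z 0 y * frE B z (n+1) y := by
    simp only [grE]
    rw [tsum_eq_single z]
    · simp
    · intro y hy; simp [hy]
  rw [h0, T_shift B z n 0]
  simp only [Nat.zero_add, frE]

lemma frE_partial (hB : ∀ x, ∑' y, BE B x y ≤ 1) (n : ℕ) :
    ∀ x, ∑ k ∈ Finset.range n, frE B z (k+1) x ≤ 1 := by
  induction n with
  | zero => intro x; simp
  | succ n ih =>
    intro x
    rw [Finset.sum_range_succ']
    have h1 : ∑ k ∈ Finset.range n, frE B z (k+1+1) x
        = ∑' w, (if w = z then 0 else BE B x w * ∑ k ∈ Finset.range n, frE B z (k+1) w) := by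
      calc ∑ k ∈ Finset.range n, frE B z (k+1+1) x
          = ∑ k ∈ Finset.range n, ∑' w, (if w = z then 0 else BE B x w * frE B z (k+1) w) := by
            refine Finset.sum_congr rfl fun k _ => ?_
            simp only [frE]
        _ = ∑' w, ∑ k ∈ Finset.range n, (if w = z then 0 else BE B x w * frE B z (k+1) w) :=
            (Summable.tsum_finsetSum fun _ _ => ENNReal.summable).symm
        _ = _ := by
            refine tsum_congr fun w => ?_
            by_cases hw : w = z
            · simp [hw]
            · simp [hw, Finset.mul_sum]
    have h2 : ∑ k ∈ Finset.range n, frE B z (k+1+1) x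
        ≤ ∑' w, (if w = z then 0 else BE B x w) := by
      rw [h1]
      refine ENNReal.tsum_le_tsum fun w => ?_
      by_cases hw : w = z
      · simp [hw]
      · simp only [hw, if_false]
        calc BE B x w * ∑ k ∈ Finset.range n, frE B z (k+1) w ≤ BE B x w * 1 :=
              mul_le_mul_right (ih w) _
          _ = BE B x w := mul_one _
    calc ∑ k ∈ Finset.range n, frE B z (k+1+1) x + frE B z (0+1) x
        ≤ (∑' w, (if w = z then 0 else BE B x w)) + BE B x z := add_le_add h2 (le_of_eq (by simp [frE]))
      _ = (∑' w, (if w = z then 0 else BE B x w)) + ∑' w, (if w = z then BE B x w else 0) := by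
          congr 1
          rw [tsum_eq_single z] <;> simp +contextual
      _ = ∑' w, BE B x w := by
          rw [← ENNReal.tsum_add]
          refine tsum_congr fun w => ?_
          by_cases hw : w = z <;> simp [hw]
      _ ≤ 1 := hB x

lemma renewal (hB : ∀ x, ∑' y, BE B x y ≤ 1) (n : ℕ) : ∀ y,
    mpE B n z y = grE B z n y + ∑ k ∈ Finset.range n, frE B z (k+1) z * mpE B (n-1-k) z y := by
  induction n with
  | zero =>
    intro y
    by_cases h : y = z
    · subst h; simp [mpE, grE]
    · simp [mpE, grE, h, Ne.symm h]
  | succ n ih =>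
    intro y
    have key : ∑' x, grE B z n x * BE B x y
        = grE B z (n+1) y + frE B z (n+1) z * mpE B 0 z y := by
      by_cases h : y = z
      · subst h
        rw [frE_grE]
        simp [grE, mpE]
      · have : ¬ (z = y) := fun hzy => h hzy.symm
        simp [grE, h, mpE, this]
    calc mpE B (n+1) z y = ∑' x, mpE B n z x * BE B x y := by simp only [mpE]
      _ = ∑' x, (grE B z n x * BE B x y
            + (∑ k ∈ Finset.range n, frE B z (k+1) z * mpE B (n-1-k) z x) * BE B x y) := by
          refine tsum_congr fun x => ?_
          rw [ih x, add_mul]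
      _ = (∑' x, grE B z n x * BE B x y)
            + ∑' x, (∑ k ∈ Finset.range n, frE B z (k+1) z * mpE B (n-1-k) z x) * BE B x y :=
          ENNReal.tsum_add
      _ = (∑' x, grE B z n x * BE B x y)
            + ∑ k ∈ Finset.range n, frE B z (k+1) z * mpE B (n-k) z y := by
          congr 1
          calc ∑' x, (∑ k ∈ Finset.range n, frE B z (k+1) z * mpE B (n-1-k) z x) * BE B x y
              = ∑' x, ∑ k ∈ Finset.range n, frE B z (k+1) z * (mpE B (n-1-k) z x * BE B x y) := by
                refine tsum_congr fun x => ?_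
                rw [Finset.sum_mul]
                exact Finset.sum_congr rfl fun k _ => mul_assoc _ _ _
            _ = ∑ k ∈ Finset.range n, ∑' x, frE B z (k+1) z * (mpE B (n-1-k) z x * BE B x y) :=
                Summable.tsum_finsetSum fun _ _ => ENNReal.summable
            _ = ∑ k ∈ Finset.range n, frE B z (k+1) z * mpE B (n-k) z y := by
                refine Finset.sum_congr rfl fun k hk => ?_
                rw [ENNReal.tsum_mul_left]
                congr 1
                have hk' : k < n := Finset.mem_range.mp hk
                have : n - k = (n - 1 - k) + 1 := by omega
                rw [this]
                simp only [mpE]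
      _ = grE B z (n+1) y + ∑ k ∈ Finset.range (n+1), frE B z (k+1) z * mpE B (n+1-1-k) z y := by
          rw [key, Finset.sum_range_succ]
          have h2 : n + 1 - 1 - n = 0 := by omega
          rw [h2]
          simp only [Nat.add_sub_cancel]
          ring

lemma conv_le (t u : ℕ → ℝ≥0∞) (N : ℕ) :
    ∑ n ∈ Finset.range N, ∑ k ∈ Finset.range n, t k * u (n-1-k)
      ≤ (∑' k, t k) * ∑ m ∈ Finset.range N, u m := by
  have h1 : ∑ n ∈ Finset.range N, ∑ k ∈ Finset.range n, t k * u (n-1-k)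
      = ∑ p ∈ (Finset.range N).sigma (fun n => Finset.range n), t p.2 * u (p.1 - 1 - p.2) :=
    Finset.sum_sigma' (Finset.range N) (fun n => Finset.range n) (fun n k => t k * u (n - 1 - k))
  set Sg := (Finset.range N).sigma (fun n => Finset.range n)
  have hinj : ∀ p ∈ Sg, ∀ q ∈ Sg,
      (fun p : Σ _ : ℕ, ℕ => (p.2, p.1 - 1 - p.2)) p = (fun p : Σ _ : ℕ, ℕ => (p.2, p.1 - 1 - p.2)) q → p = q := by
    rintro ⟨n, k⟩ hp ⟨n', k'⟩ hq h
    have hp' : k < n := by simpa using (Finset.mem_sigma.mp hp).2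
    have hq' : k' < n' := by simpa using (Finset.mem_sigma.mp hq).2
    simp only [Prod.mk.injEq] at h
    obtain ⟨h1, h2⟩ := h
    subst h1
    have : n = n' := by omega
    subst this
    rfl
  have h2 : ∑ p ∈ Sg, t p.2 * u (p.1 - 1 - p.2)
      = ∑ q ∈ Sg.image (fun p : Σ _ : ℕ, ℕ => (p.2, p.1 - 1 - p.2)), t q.1 * u q.2 := by
    rw [Finset.sum_image hinj]
  have h3 : Sg.image (fun p : Σ _ : ℕ, ℕ => (p.2, p.1 - 1 - p.2))
      ⊆ Finset.range N ×ˢ Finset.range N := by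
    intro q hq
    simp only [Finset.mem_image, Finset.mem_sigma, Finset.mem_range, Sg] at hq
    obtain ⟨⟨n, k⟩, ⟨hn, hk⟩, rfl⟩ := hq
    have hn' : n < N := by simpa using hn
    have hk' : k < n := by simpa using hk
    simp only [Finset.mem_product, Finset.mem_range]
    exact ⟨by omega, by omega⟩
  calc ∑ n ∈ Finset.range N, ∑ k ∈ Finset.range n, t k * u (n-1-k)
      = ∑ q ∈ Sg.image (fun p : Σ _ : ℕ, ℕ => (p.2, p.1 - 1 - p.2)), t q.1 * u q.2 := by
        rw [h1, h2]
    _ ≤ ∑ q ∈ Finset.range N ×ˢ Finset.range N, t q.1 * u q.2 :=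
        Finset.sum_le_sum_of_subset h3
    _ = (∑ k ∈ Finset.range N, t k) * ∑ m ∈ Finset.range N, u m := by
        rw [Finset.sum_product]
        simp [← Finset.mul_sum, Finset.sum_mul]
    _ ≤ (∑' k, t k) * ∑ m ∈ Finset.range N, u m :=
        mul_le_mul_left (ENNReal.sum_le_tsum _) _

lemma renewal_sum (hB : ∀ x, ∑' y, BE B x y ≤ 1) (n : ℕ) :
    ∑' y, mpE B n z y = (∑' y, grE B z n y)
      + ∑ k ∈ Finset.range n, frE B z (k+1) z * ∑' y, mpE B (n-1-k) z y := by
  calc ∑' y, mpE B n z y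
      = ∑' y, (grE B z n y + ∑ k ∈ Finset.range n, frE B z (k+1) z * mpE B (n-1-k) z y) :=
        tsum_congr fun y => renewal B z hB n y
    _ = (∑' y, grE B z n y) + ∑' y, ∑ k ∈ Finset.range n, frE B z (k+1) z * mpE B (n-1-k) z y :=
        ENNReal.tsum_add
    _ = (∑' y, grE B z n y)
        + ∑ k ∈ Finset.range n, frE B z (k+1) z * ∑' y, mpE B (n-1-k) z y := by
        congr 1
        rw [Summable.tsum_finsetSum fun _ _ => ENNReal.summable]
        exact Finset.sum_congr rfl fun k _ => ENNReal.tsum_mul_left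

lemma mpE_ne_top (hB : ∀ x, ∑' y, BE B x y ≤ 1) (n : ℕ) (x y : S) : mpE B n x y ≠ ⊤ :=
  ((ENNReal.le_tsum y).trans (mpE_row B hB n x)).trans_lt ENNReal.one_lt_top |>.ne

lemma grE_ne_top (hB : ∀ x, ∑' y, BE B x y ≤ 1) (n : ℕ) (y : S) : grE B z n y ≠ ⊤ :=
  ((ENNReal.le_tsum y).trans (grE_row B z hB n)).trans_lt ENNReal.one_lt_top |>.ne

lemma frE_le_one (hB : ∀ x, ∑' y, BE B x y ≤ 1) (n : ℕ) (x : S) : frE B z n x ≤ 1 := by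
  cases n with
  | zero => simp [frE]
  | succ n =>
    calc frE B z (n+1) x ≤ ∑ k ∈ Finset.range (n+1), frE B z (k+1) x :=
          Finset.single_le_sum (f := fun k => frE B z (k+1) x) (fun _ _ => zero_le)
            (Finset.self_mem_range_succ n)
      _ ≤ 1 := frE_partial B z hB (n+1) x

lemma frE_ne_top (hB : ∀ x, ∑' y, BE B x y ≤ 1) (n : ℕ) (x : S) : frE B z n x ≠ ⊤ :=
  (frE_le_one B z hB n x).trans_lt ENNReal.one_lt_top |>.ne

lemma frE_le_bE (hB : ∀ x, ∑' y, BE B x y ≤ 1) (n : ℕ) :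
    frE B z (n+1) z ≤ ∑' y, grE B z n y := by
  rw [frE_grE]
  refine ENNReal.tsum_le_tsum fun y => ?_
  calc grE B z n y * BE B y z ≤ grE B z n y * 1 :=
        mul_le_mul_right ((ENNReal.le_tsum z).trans (hB y)) _
    _ = grE B z n y := mul_one _

section Transfer
variable (hnn : ∀ x y, 0 ≤ B x y) (hrow : ∀ x, Summable (fun y => B x y))
  (hsub : ∀ x, ∑' y, B x y ≤ 1)

include hnn hrow hsub

lemma hBrow : ∀ x, ∑' y, BE B x y ≤ 1 := rowE B hnn hrow hsub

lemma B_eq (x y : S) : B x y = (BE B x y).toReal := (ENNReal.toReal_ofReal (hnn x y)).symm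

lemma matPow_eq (n : ℕ) (x y : S) : matPow B n x y = (mpE B n x y).toReal := by
  induction n generalizing x y with
  | zero =>
    simp only [matPow, mpE]
    split <;> simp
  | succ n ih =>
    have hB := hBrow B hnn hrow hsub
    simp only [matPow, mpE]
    rw [ENNReal.tsum_toReal_eq (f := fun w => mpE B n x w * BE B w y) fun w =>
      ENNReal.mul_ne_top (mpE_ne_top B hB n x w) ENNReal.ofReal_ne_top]
    refine tsum_congr fun w => ?_
    rw [ih, B_eq B hnn hrow hsub, ENNReal.toReal_mul]

lemma fret_eq (n : ℕ) (x : S) : fret B z n x = (frE B z n x).toReal := by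
  have hB := hBrow B hnn hrow hsub
  induction n generalizing x with
  | zero => simp [fret, frE]
  | succ n ih =>
    match n, ih with
    | 0, _ => simp only [fret, frE]; exact B_eq B hnn hrow hsub x z
    | m+1, ih =>
      simp only [fret, frE]
      rw [ENNReal.tsum_toReal_eq fun w => ?_]
      · refine tsum_congr fun w => ?_
        by_cases hw : w = z
        · simp [hw]
        · simp only [hw, if_false]
          rw [ih, B_eq B hnn hrow hsub, ENNReal.toReal_mul]
      · by_cases hw : w = z
        · simp [hw]
        · simp only [hw, if_false]
          exact ENNReal.mul_ne_top ENNReal.ofReal_ne_top (frE_ne_top B z hB (m+1) w)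

lemma grow_eq (n : ℕ) (y : S) : grow B z n y = (grE B z n y).toReal := by
  have hB := hBrow B hnn hrow hsub
  induction n generalizing y with
  | zero => simp only [grow, grE]; split <;> simp
  | succ n ih =>
    simp only [grow, grE]
    by_cases hy : y = z
    · simp [hy]
    · simp only [hy, if_false]
      rw [ENNReal.tsum_toReal_eq (f := fun x => grE B z n x * BE B x y) fun x =>
        ENNReal.mul_ne_top (grE_ne_top B z hB n x) ENNReal.ofReal_ne_top]
      refine tsum_congr fun x => ?_
      rw [ih, B_eq B hnn hrow hsub, ENNReal.toReal_mul]

lemma a_eq (n : ℕ) : ∑' y, matPow B n z y = (∑' y, mpE B n z y).toReal := by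
  have hB := hBrow B hnn hrow hsub
  rw [ENNReal.tsum_toReal_eq fun y => mpE_ne_top B hB n z y]
  exact tsum_congr fun y => matPow_eq B hnn hrow hsub n z y

lemma b_eq (n : ℕ) : ∑' y, grow B z n y = (∑' y, grE B z n y).toReal := by
  have hB := hBrow B hnn hrow hsub
  rw [ENNReal.tsum_toReal_eq fun y => grE_ne_top B z hB n y]
  exact tsum_congr fun y => grow_eq B z hnn hrow hsub n y

end Transfer

omit [DecidableEq S] in
lemma sumE_iff (c : ℕ → ℝ≥0∞) (hc : ∀ n, c n ≠ ⊤) (e : ℕ → ℝ) (he : ∀ n, 0 ≤ e n) :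
    Summable (fun n => e n * (c n).toReal) ↔ ∑' n, ENNReal.ofReal (e n) * c n ≠ ⊤ := by
  constructor
  · intro h
    have h1 : ENNReal.ofReal (∑' n, e n * (c n).toReal) = ∑' n, ENNReal.ofReal (e n) * c n := by
      rw [ENNReal.ofReal_tsum_of_nonneg (fun n => mul_nonneg (he n) ENNReal.toReal_nonneg) h]
      exact tsum_congr fun n => by
        rw [ENNReal.ofReal_mul (he n), ENNReal.ofReal_toReal (hc n)]
    rw [← h1]
    exact ENNReal.ofReal_ne_top
  · intro h
    have := ENNReal.summable_toReal h
    refine this.congr fun n => ?_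
    rw [ENNReal.toReal_mul, ENNReal.toReal_ofReal (he n)]

end Core
end Stmt11Aux

open Stmt11Aux ENNReal in
/-- Theorem 3: with `θ₁ = sup{γ : ∑_n e^{γn} P_z(T > n) < ∞}` and
`θ₂ = sup{γ : ∑_n e^{γn} P_z(T ∧ τ > n) < ∞}` (as extended reals), if `θ₂ > θ₁` then
there exists `θ ≥ 0` (with `θ < θ₂`) satisfying A1 and A2. -/
theorem stmt11 {S : Type*} [Countable S] [Nonempty S] [DecidableEq S]
    (B : S → S → ℝ)
    (hnn : ∀ x y, 0 ≤ B x y)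
    (hrow : ∀ x, Summable (fun y => B x y))
    (hsub : ∀ x, ∑' y, B x y ≤ 1)
    (hirr : ∀ x y, ∃ n, 1 ≤ n ∧ 0 < matPow B n x y)
    (z : S) (θ₁ θ₂ : EReal)
    (hθ₁ : θ₁ = sSup ((fun γ : ℝ => (γ : EReal)) ''
      {γ : ℝ | Summable (fun n : ℕ => Real.exp (γ * (n : ℝ)) * ∑' y, matPow B n z y)}))
    (hθ₂ : θ₂ = sSup ((fun γ : ℝ => (γ : EReal)) ''
      {γ : ℝ | Summable (fun n : ℕ => Real.exp (γ * (n : ℝ)) * ∑' y, grow B z n y)}))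
    (hlt : θ₁ < θ₂) :
    ∃ θ : ℝ, 0 ≤ θ ∧ (θ : EReal) < θ₂ ∧
      (∑' n : ℕ, Real.exp (θ * ((n : ℝ) + 1)) * fret B z (n + 1) z = 1) ∧
      Summable (fun n : ℕ =>
        ((n : ℝ) + 1) * Real.exp (θ * ((n : ℝ) + 1)) * fret B z (n + 1) z) := by
  classical
  have hB : ∀ x, ∑' y, BE B x y ≤ 1 := rowE B hnn hrow hsub
  set aE : ℕ → ℝ≥0∞ := fun n => ∑' y, mpE B n z y with haEdef
  set bE : ℕ → ℝ≥0∞ := fun n => ∑' y, grE B z n y with hbEdef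
  have haE1 : ∀ n, aE n ≤ 1 := fun n => mpE_row B hB n z
  have hbE1 : ∀ n, bE n ≤ 1 := fun n => grE_row B z hB n
  have haEt : ∀ n, aE n ≠ ⊤ := fun n => ((haE1 n).trans_lt ENNReal.one_lt_top).ne
  have hbEt : ∀ n, bE n ≠ ⊤ := fun n => ((hbE1 n).trans_lt ENNReal.one_lt_top).ne
  -- characterizations of membership in the two sets
  have hmem1 : ∀ γ : ℝ, Summable (fun n : ℕ => Real.exp (γ * (n : ℝ)) * ∑' y, matPow B n z y)
      ↔ ∑' n : ℕ, ENNReal.ofReal (Real.exp (γ * (n : ℝ))) * aE n ≠ ⊤ := by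
    intro γ
    have h : (fun n : ℕ => Real.exp (γ * (n : ℝ)) * ∑' y, matPow B n z y)
        = fun n : ℕ => Real.exp (γ * (n : ℝ)) * (aE n).toReal := by
      funext n; rw [a_eq B z hnn hrow hsub n]
    rw [h]
    exact sumE_iff aE haEt _ (fun n => (Real.exp_pos _).le)
  have hmem2 : ∀ γ : ℝ, Summable (fun n : ℕ => Real.exp (γ * (n : ℝ)) * ∑' y, grow B z n y)
      ↔ ∑' n : ℕ, ENNReal.ofReal (Real.exp (γ * (n : ℝ))) * bE n ≠ ⊤ := by
    intro γ
    have h : (fun n : ℕ => Real.exp (γ * (n : ℝ)) * ∑' y, grow B z n y)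
        = fun n : ℕ => Real.exp (γ * (n : ℝ)) * (bE n).toReal := by
      funext n; rw [b_eq B z hnn hrow hsub n]
    rw [h]
    exact sumE_iff bE hbEt _ (fun n => (Real.exp_pos _).le)
  have hmono : ∀ (c : ℕ → ℝ≥0∞) (γ γ' : ℝ), γ' ≤ γ →
      ∑' n : ℕ, ENNReal.ofReal (Real.exp (γ' * (n : ℝ))) * c n
        ≤ ∑' n : ℕ, ENNReal.ofReal (Real.exp (γ * (n : ℝ))) * c n := by
    intro c γ γ' hle
    refine ENNReal.tsum_le_tsum fun n => mul_le_mul_left (ENNReal.ofReal_le_ofReal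
      (Real.exp_le_exp.2 (mul_le_mul_of_nonneg_right hle (Nat.cast_nonneg n)))) _
  have hmem_le : ∀ (A : Set ℝ) (γ : ℝ), γ ∈ A →
      (γ : EReal) ≤ sSup ((fun γ : ℝ => (γ : EReal)) '' A) :=
    fun A γ h => le_sSup ⟨γ, h, rfl⟩
  have hlt_mem : ∀ (A : Set ℝ) (γ : ℝ), (∀ γ1 γ2 : ℝ, γ1 ≤ γ2 → γ2 ∈ A → γ1 ∈ A) →
      (γ : EReal) < sSup ((fun γ : ℝ => (γ : EReal)) '' A) → γ ∈ A := by
    intro A γ hdc h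
    obtain ⟨b, hbA, hgb⟩ := lt_sSup_iff.mp h
    obtain ⟨γ', hγ'A, rfl⟩ := hbA
    exact hdc γ γ' (EReal.coe_le_coe_iff.mp (by simpa using hgb.le)) hγ'A
  have hdc2 : ∀ γ1 γ2 : ℝ, γ1 ≤ γ2 →
      γ2 ∈ {γ : ℝ | Summable (fun n : ℕ => Real.exp (γ * (n : ℝ)) * ∑' y, grow B z n y)} →
      γ1 ∈ {γ : ℝ | Summable (fun n : ℕ => Real.exp (γ * (n : ℝ)) * ∑' y, grow B z n y)} := by
    intro γ1 γ2 hle h2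
    simp only [Set.mem_setOf_eq] at h2 ⊢
    rw [hmem2] at h2 ⊢
    exact fun h => h2 (eq_top_iff.2 (h ▸ hmono bE γ2 γ1 hle))
  -- θ₁ ≥ 0
  have hθ₁0 : (0 : EReal) ≤ θ₁ := by
    by_contra hcon
    push_neg at hcon
    have hcon' : θ₁ < ((0 : ℝ) : EReal) := by exact_mod_cast hcon
    obtain ⟨q, hq1, hq2⟩ := EReal.exists_between_coe_real hcon'
    have hq0 : q < 0 := by exact_mod_cast hq2
    have hqmem : Summable (fun n : ℕ => Real.exp (q * (n : ℝ)) * ∑' y, matPow B n z y) := by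
      have hgeo : Summable (fun n : ℕ => Real.exp q ^ n) :=
        summable_geometric_of_lt_one (Real.exp_pos q).le (Real.exp_lt_one_iff.2 hq0)
    
      refine Summable.of_nonneg_of_le (fun n => ?_) (fun n => ?_) hgeo
      · refine mul_nonneg (Real.exp_pos _).le ?_
        rw [a_eq B z hnn hrow hsub n]
        exact ENNReal.toReal_nonneg
      · have h1 : ∑' y, matPow B n z y ≤ 1 := by
          rw [a_eq B z hnn hrow hsub n]
          exact le_trans (ENNReal.toReal_mono one_ne_top (haE1 n)) (by norm_num)
        have h2 : 0 ≤ ∑' y, matPow B n z y := by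
          rw [a_eq B z hnn hrow hsub n]; exact ENNReal.toReal_nonneg
        calc Real.exp (q * (n : ℝ)) * ∑' y, matPow B n z y ≤ Real.exp (q * (n : ℝ)) * 1 :=
              mul_le_mul_of_nonneg_left h1 (Real.exp_pos _).le
          _ = Real.exp q ^ n := by rw [mul_one, mul_comm, Real.exp_nat_mul]
    have := hmem_le {γ : ℝ | Summable (fun n : ℕ => Real.exp (γ * (n : ℝ)) * ∑' y, matPow B n z y)} q hqmem
    rw [← hθ₁] at this
    exact absurd hq1 (not_lt.2 this)
  -- pick γ₀ and γ₁
  obtain ⟨γ₀, hγ₀l, hγ₀r⟩ := EReal.exists_between_coe_real hlt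
  obtain ⟨γ₁, hγ₁l, hγ₁r⟩ := EReal.exists_between_coe_real hγ₀r
  have hγ₀pos : (0 : ℝ) < γ₀ := by
    have h := lt_of_le_of_lt hθ₁0 hγ₀l
    exact_mod_cast h
  have hγ₀γ₁ : γ₀ < γ₁ := by exact_mod_cast hγ₁l
  have hγ₁mem : ∑' n : ℕ, ENNReal.ofReal (Real.exp (γ₁ * (n : ℝ))) * bE n ≠ ⊤ := by
    rw [← hmem2]
    exact hlt_mem _ γ₁ hdc2 (hθ₂ ▸ hγ₁r)
  have hγ₀bmem : ∑' n : ℕ, ENNReal.ofReal (Real.exp (γ₀ * (n : ℝ))) * bE n ≠ ⊤ :=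
    fun h => hγ₁mem (eq_top_iff.2 (h ▸ hmono bE γ₁ γ₀ hγ₀γ₁.le))
  -- F in ENNReal
  set FE : ℝ → ℝ≥0∞ :=
    fun γ => ∑' n : ℕ, ENNReal.ofReal (Real.exp (γ * ((n : ℝ) + 1))) * frE B z (n+1) z with hFEdef
  have hFEle : ∀ γ : ℝ, FE γ ≤ ENNReal.ofReal (Real.exp γ)
      * ∑' n : ℕ, ENNReal.ofReal (Real.exp (γ * (n : ℝ))) * bE n := by
    intro γ
    rw [← ENNReal.tsum_mul_left]
    refine ENNReal.tsum_le_tsum fun n => ?_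
    have h1 : ENNReal.ofReal (Real.exp (γ * ((n : ℝ) + 1)))
        = ENNReal.ofReal (Real.exp γ) * ENNReal.ofReal (Real.exp (γ * (n : ℝ))) := by
      rw [← ENNReal.ofReal_mul (Real.exp_pos _).le, ← Real.exp_add]
      ring_nf
    rw [h1, mul_assoc]
    exact mul_le_mul_right (mul_le_mul_right (frE_le_bE B z hB n) _) _
  have hFEγ₁ : FE γ₁ ≠ ⊤ :=
    ((hFEle γ₁).trans_lt (ENNReal.mul_lt_top ENNReal.ofReal_lt_top hγ₁mem.lt_top)).ne
  have hFEγ₀ : FE γ₀ ≠ ⊤ :=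
    ((hFEle γ₀).trans_lt (ENNReal.mul_lt_top ENNReal.ofReal_lt_top hγ₀bmem.lt_top)).ne
  -- key inequality : 1 ≤ FE γ₀
  have hkey : 1 ≤ FE γ₀ := by
    by_contra hcon
    push_neg at hcon
    set s : ℕ → ℝ≥0∞ := fun n => ENNReal.ofReal (Real.exp (γ₀ * (n : ℝ))) with hsdef
    have hsmul : ∀ a b : ℕ, s (a + b) = s a * s b := by
      intro a b
      simp only [hsdef]
      rw [← ENNReal.ofReal_mul (Real.exp_pos _).le, ← Real.exp_add]
      congr 2
      push_cast
      ring
    have hFEs : FE γ₀ = ∑' k : ℕ, s (k+1) * frE B z (k+1) z := by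
      refine tsum_congr fun k => ?_
      congr 2
      push_cast
      ring
    have hSN : ∀ N : ℕ, ∑ n ∈ Finset.range N, s n * aE n
        ≤ (∑' n : ℕ, s n * bE n) + FE γ₀ * ∑ n ∈ Finset.range N, s n * aE n := by
      intro N
      have hterm : ∀ n : ℕ, s n * aE n = s n * bE n
          + ∑ k ∈ Finset.range n, (s (k+1) * frE B z (k+1) z) * (s (n-1-k) * aE (n-1-k)) := by
        intro n
        have hren := renewal_sum B z hB n
        calc s n * aE n = s n * (bE n + ∑ k ∈ Finset.range n, frE B z (k+1) z * aE (n-1-k)) := by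
              rw [haEdef, hbEdef]; exact congrArg _ hren
          _ = s n * bE n + ∑ k ∈ Finset.range n, s n * (frE B z (k+1) z * aE (n-1-k)) := by
              rw [mul_add, Finset.mul_sum]
          _ = s n * bE n
              + ∑ k ∈ Finset.range n, (s (k+1) * frE B z (k+1) z) * (s (n-1-k) * aE (n-1-k)) := by
              congr 1
              refine Finset.sum_congr rfl fun k hk => ?_
              have hk' := Finset.mem_range.mp hk
              have hn : n = (k+1) + (n-1-k) := by omega
              calc s n * (frE B z (k+1) z * aE (n-1-k))
                  = (s (k+1) * s (n-1-k)) * (frE B z (k+1) z * aE (n-1-k)) := by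
                    rw [← hsmul, ← hn]
                _ = (s (k+1) * frE B z (k+1) z) * (s (n-1-k) * aE (n-1-k)) := by ring
      calc ∑ n ∈ Finset.range N, s n * aE n
          = ∑ n ∈ Finset.range N, (s n * bE n
            + ∑ k ∈ Finset.range n, (s (k+1) * frE B z (k+1) z) * (s (n-1-k) * aE (n-1-k))) :=
            Finset.sum_congr rfl fun n _ => hterm n
        _ = (∑ n ∈ Finset.range N, s n * bE n)
            + ∑ n ∈ Finset.range N, ∑ k ∈ Finset.range n,
              (s (k+1) * frE B z (k+1) z) * (s (n-1-k) * aE (n-1-k)) := Finset.sum_add_distrib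
        _ ≤ (∑' n : ℕ, s n * bE n)
            + (∑' k : ℕ, s (k+1) * frE B z (k+1) z) * ∑ m ∈ Finset.range N, s m * aE m := by
            refine add_le_add (ENNReal.sum_le_tsum _) ?_
            exact conv_le (fun k => s (k+1) * frE B z (k+1) z) (fun m => s m * aE m) N
        _ = (∑' n : ℕ, s n * bE n) + FE γ₀ * ∑ n ∈ Finset.range N, s n * aE n := by
            rw [hFEs]
    have hSNt : ∀ N : ℕ, (∑ n ∈ Finset.range N, s n * aE n) ≠ ⊤ := by
      intro N
      refine (ENNReal.sum_lt_top.2 fun n _ => ?_).ne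
      exact ENNReal.mul_lt_top ENNReal.ofReal_lt_top (haEt n).lt_top
    have h1φ : (1 : ℝ≥0∞) - FE γ₀ ≠ 0 := by
      rw [ne_eq, tsub_eq_zero_iff_le]
      exact not_le.2 hcon
    have h1φt : (1 : ℝ≥0∞) - FE γ₀ ≠ ⊤ := (tsub_le_self.trans_lt ENNReal.one_lt_top).ne
    have hbound : ∀ N : ℕ, ∑ n ∈ Finset.range N, s n * aE n
        ≤ (∑' n : ℕ, s n * bE n) / (1 - FE γ₀) := by
      intro N
      rw [ENNReal.le_div_iff_mul_le (Or.inl h1φ) (Or.inl h1φt)]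
      have hsplit : (∑ n ∈ Finset.range N, s n * aE n) * (1 - FE γ₀)
          + (∑ n ∈ Finset.range N, s n * aE n) * FE γ₀ = ∑ n ∈ Finset.range N, s n * aE n := by
        rw [← mul_add, tsub_add_cancel_of_le hcon.le, mul_one]
      have h3 : (∑ n ∈ Finset.range N, s n * aE n) * (1 - FE γ₀)
          + (∑ n ∈ Finset.range N, s n * aE n) * FE γ₀
          ≤ (∑' n : ℕ, s n * bE n) + (∑ n ∈ Finset.range N, s n * aE n) * FE γ₀ := by
        rw [hsplit]
        calc ∑ n ∈ Finset.range N, s n * aE n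
            ≤ (∑' n : ℕ, s n * bE n) + FE γ₀ * ∑ n ∈ Finset.range N, s n * aE n := hSN N
          _ = (∑' n : ℕ, s n * bE n) + (∑ n ∈ Finset.range N, s n * aE n) * FE γ₀ := by
              rw [mul_comm]
      exact (ENNReal.add_le_add_iff_right (ENNReal.mul_ne_top (hSNt N) hFEγ₀)).mp h3
    have htop : (∑' n : ℕ, s n * aE n) ≠ ⊤ := by
      refine ((tsum_le_of_sum_range_le hbound).trans_lt ?_).ne
      exact ENNReal.div_lt_top hγ₀bmem h1φ
    have : γ₀ ∈ {γ : ℝ | Summable (fun n : ℕ => Real.exp (γ * (n : ℝ)) * ∑' y, matPow B n z y)} := by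
      simp only [Set.mem_setOf_eq]
      rw [hmem1]
      exact htop
    have hle := hmem_le {γ : ℝ | Summable (fun n : ℕ => Real.exp (γ * (n : ℝ)) * ∑' y, matPow B n z y)} γ₀ this
    rw [← hθ₁] at hle
    exact absurd hγ₀l (not_lt.2 hle)
  -- the real function
  have hfnn : ∀ n x, 0 ≤ fret B z n x := by
    intro n x
    rw [fret_eq B z hnn hrow hsub n x]
    exact ENNReal.toReal_nonneg
  have hFreal : ∀ γ : ℝ,
      (∑' n : ℕ, Real.exp (γ * ((n : ℝ) + 1)) * fret B z (n + 1) z) = (FE γ).toReal := by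
    intro γ
    rw [hFEdef]
    rw [ENNReal.tsum_toReal_eq
      (f := fun n : ℕ => ENNReal.ofReal (Real.exp (γ * ((n : ℝ) + 1))) * frE B z (n+1) z)
      fun n => ENNReal.mul_ne_top ENNReal.ofReal_ne_top (frE_ne_top B z hB (n+1) z)]
    refine tsum_congr fun n => ?_
    rw [ENNReal.toReal_mul, ENNReal.toReal_ofReal (Real.exp_pos _).le,
      fret_eq B z hnn hrow hsub (n+1) z]
  have hsummand : ∀ γ : ℝ, FE γ ≠ ⊤ →
      Summable (fun n : ℕ => Real.exp (γ * ((n : ℝ) + 1)) * fret B z (n + 1) z) := by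
    intro γ h
    refine (ENNReal.summable_toReal h).congr fun n => ?_
    rw [ENNReal.toReal_mul, ENNReal.toReal_ofReal (Real.exp_pos _).le,
      fret_eq B z hnn hrow hsub (n+1) z]
  have hcont : ContinuousOn
      (fun θ : ℝ => ∑' n : ℕ, Real.exp (θ * ((n : ℝ) + 1)) * fret B z (n + 1) z)
      (Set.Icc 0 γ₀) := by
    refine continuousOn_tsum (fun n => ?_) (hsummand γ₀ hFEγ₀) (fun n θ hθ => ?_)
    · exact ((Real.continuous_exp.comp (continuous_id.mul continuous_const)).mul
        continuous_const).continuousOn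
    · have h1 : θ * ((n : ℝ) + 1) ≤ γ₀ * ((n : ℝ) + 1) :=
        mul_le_mul_of_nonneg_right hθ.2 (by positivity)
      rw [Real.norm_eq_abs, abs_of_nonneg (mul_nonneg (Real.exp_pos _).le (hfnn (n+1) z))]
      exact mul_le_mul_of_nonneg_right (Real.exp_le_exp.2 h1) (hfnn (n+1) z)
  have hFE0 : FE 0 ≤ 1 := by
    have h : FE 0 = ∑' n : ℕ, frE B z (n+1) z := by
      rw [hFEdef]
      refine tsum_congr fun n => ?_
      simp
    rw [h]
    exact tsum_le_of_sum_range_le fun N => frE_partial B z hB N z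
  have hF0 : (∑' n : ℕ, Real.exp ((0:ℝ) * ((n : ℝ) + 1)) * fret B z (n + 1) z) ≤ 1 := by
    rw [hFreal 0]
    exact le_trans (ENNReal.toReal_mono ENNReal.one_ne_top hFE0) (by norm_num)
  have hFγ₀1 : (1:ℝ) ≤ ∑' n : ℕ, Real.exp (γ₀ * ((n : ℝ) + 1)) * fret B z (n + 1) z := by
    rw [hFreal γ₀]
    have := ENNReal.toReal_mono hFEγ₀ hkey
    simpa using this
  have h1mem : (1 : ℝ) ∈ Set.Icc
      (∑' n : ℕ, Real.exp ((0:ℝ) * ((n : ℝ) + 1)) * fret B z (n + 1) z)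
      (∑' n : ℕ, Real.exp (γ₀ * ((n : ℝ) + 1)) * fret B z (n + 1) z) := ⟨hF0, hFγ₀1⟩
  obtain ⟨θ, hθmem, hθeq⟩ := intermediate_value_Icc hγ₀pos.le hcont h1mem
  refine ⟨θ, hθmem.1, ?_, hθeq, ?_⟩
  · have h1 : (θ : EReal) ≤ (γ₀ : EReal) := by exact_mod_cast hθmem.2
    exact lt_of_le_of_lt h1 hγ₀r
  · have hsum1 : Summable (fun n : ℕ => Real.exp (γ₁ * ((n : ℝ) + 1)) * fret B z (n + 1) z) :=
      hsummand γ₁ hFEγ₁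
    set δ : ℝ := γ₁ - γ₀ with hδdef
    have hδpos : 0 < δ := by simp only [hδdef]; linarith
    refine Summable.of_nonneg_of_le (fun n => ?_) (fun n => ?_) (hsum1.mul_left (1/δ))
    · exact mul_nonneg (mul_nonneg (by positivity) (Real.exp_pos _).le) (hfnn (n+1) z)
    · have hfn : 0 ≤ fret B z (n+1) z := hfnn (n+1) z
      have key : ((n : ℝ) + 1) * Real.exp (θ * ((n : ℝ) + 1))
          ≤ (1/δ) * Real.exp (γ₁ * ((n : ℝ) + 1)) := by
        have h2 : δ * ((n : ℝ) + 1) ≤ Real.exp (δ * ((n : ℝ) + 1)) := by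
          linarith [Real.add_one_le_exp (δ * ((n : ℝ) + 1))]
        have h1 : ((n : ℝ) + 1) ≤ (1/δ) * Real.exp (δ * ((n : ℝ) + 1)) := by
          calc ((n : ℝ) + 1) = (1/δ) * (δ * ((n : ℝ) + 1)) := by field_simp
            _ ≤ (1/δ) * Real.exp (δ * ((n : ℝ) + 1)) :=
                mul_le_mul_of_nonneg_left h2 (by positivity)
        calc ((n : ℝ) + 1) * Real.exp (θ * ((n : ℝ) + 1))
            ≤ ((1/δ) * Real.exp (δ * ((n : ℝ) + 1))) * Real.exp (θ * ((n : ℝ) + 1)) :=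
              mul_le_mul_of_nonneg_right h1 (Real.exp_pos _).le
          _ = (1/δ) * Real.exp ((δ + θ) * ((n : ℝ) + 1)) := by
              rw [mul_assoc, ← Real.exp_add]
              ring_nf
          _ ≤ (1/δ) * Real.exp (γ₁ * ((n : ℝ) + 1)) := by
              refine mul_le_mul_of_nonneg_left (Real.exp_le_exp.2 ?_) (by positivity)
              have hθγ₀ : θ ≤ γ₀ := hθmem.2
              have h4 : δ + θ ≤ γ₁ := by simp only [hδdef]; linarith
              exact mul_le_mul_of_nonneg_right h4 (by positivity)
      calc ((n : ℝ) + 1) * Real.exp (θ * ((n : ℝ) + 1)) * fret B z (n+1) z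
          ≤ ((1/δ) * Real.exp (γ₁ * ((n : ℝ) + 1))) * fret B z (n+1) z :=
            mul_le_mul_of_nonneg_right key hfn
        _ = (1/δ) * (Real.exp (γ₁ * ((n : ℝ) + 1)) * fret B z (n+1) z) := by ring
end

section
/- (Core estimate of Theorem 5.) Assume A3: there exist v ∈ S and constants 0 < c₁ < c₂ < ∞ such that c₁·B(v,y) ≤ B(x,y) ≤ c₂·B(v,y) for all x, y ∈ S. Let s_v = ∑_{w∈S} B(v,w), ψ(y) = B(v,y)/s_v, δ = c₁·s_v, B̃(x,y) = B(x,y) − δ·ψ(y), and define θ₁^ψ = sup{γ ∈ ℝ : ∑_{n≥0} e^{γn}·(∑_{y∈S} (ψB^n)(y)) < ∞} and θ₂^ψ = sup{γ ∈ ℝ : ∑_{n≥0} e^{γn}·(∑_{y∈S} (ψB̃^n)(y)) < ∞}. Then θ₁^ψ is finite and θ₂^ψ ≥ θ₁^ψ − log(1 − c₁/c₂); in particular θ₂^ψ > θ₁^ψ. -/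
/-- Row iterates `(ψ M^j)(y)`: `(ψ M^0) = ψ`, `(ψ M^{j+1})(y) = ∑_x (ψ M^j)(x) M(x,y)`. -/
noncomputable def rowIter {S : Type*} (ψ : S → ℝ) (M : S → S → ℝ) : ℕ → S → ℝ
  | 0 => ψ
  | j + 1 => fun y => ∑' x, rowIter ψ M j x * M x y

/-- Column sums `(M^j 𝟙)(x) = ∑_y M^j(x,y)`. -/
noncomputable def colSum {S : Type*} [DecidableEq S] (M : S → S → ℝ) (j : ℕ) (x : S) : ℝ :=
  ∑' y, matPow M j x y

/-- The column eigenvector candidate built from the randomized regeneration structure: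
`u*(x) = δ ∑_{k ≥ 1} e^{θ k} (B̃^{k-1} 𝟙)(x)`. -/
noncomputable def uStarPsi {S : Type*} [DecidableEq S] (Bt : S → S → ℝ) (δ θ : ℝ)
    (x : S) : ℝ :=
  δ * ∑' k : ℕ, Real.exp (θ * ((k : ℝ) + 1)) * colSum Bt k x

/-- The row eigenvector candidate built from the randomized regeneration structure:
`η*(y) = ∑_{j ≥ 0} e^{θ j} (ψ B̃^j)(y)`. -/
noncomputable def etaStarPsi {S : Type*} (ψ : S → ℝ) (Bt : S → S → ℝ) (θ : ℝ)
    (y : S) : ℝ :=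
  ∑' j : ℕ, Real.exp (θ * (j : ℝ)) * rowIter ψ Bt j y

section Aux

variable {S : Type*}

/-- One step of the row iteration: summability and tsum bound. -/
lemma step_facts (f : S → ℝ) (M : S → S → ℝ)
    (hf0 : ∀ x, 0 ≤ f x) (hfs : Summable f)
    (hM0 : ∀ x y, 0 ≤ M x y) (hMs : ∀ x, Summable (M x)) (hM1 : ∀ x, ∑' y, M x y ≤ 1) :
    Summable (fun y => ∑' x, f x * M x y) ∧
    (∑' y, ∑' x, f x * M x y) ≤ ∑' x, f x := by
  have hnn : ∀ p : S × S, 0 ≤ f p.1 * M p.1 p.2 :=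
    fun p => mul_nonneg (hf0 _) (hM0 _ _)
  have hslice : ∀ x, Summable (fun y => f x * M x y) := fun x => (hMs x).mul_left _
  have hcol_eq : ∀ x, (∑' y, f x * M x y) = f x * ∑' y, M x y := fun x => tsum_mul_left
  have hcol : Summable (fun x => ∑' y, f x * M x y) := by
    apply Summable.of_nonneg_of_le (fun x => tsum_nonneg (fun y => hnn (x, y)))
      (fun x => ?_) hfs
    rw [hcol_eq x]
    calc f x * ∑' y, M x y ≤ f x * 1 :=
          mul_le_mul_of_nonneg_left (hM1 x) (hf0 x)
      _ = f x := mul_one _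
  have hprod : Summable (fun p : S × S => f p.1 * M p.1 p.2) :=
    (summable_prod_of_nonneg hnn).mpr ⟨hslice, hcol⟩
  have hswap : Summable (fun p : S × S => f p.2 * M p.2 p.1) := hprod.prod_symm
  have hcslice : ∀ y, Summable (fun x => f x * M x y) := by
    intro y
    exact ((summable_prod_of_nonneg (fun p => hnn p.swap)).mp hswap).1 y
  have h1 : Summable (fun y => ∑' x, f x * M x y) :=
    ((summable_prod_of_nonneg (fun p => hnn p.swap)).mp hswap).2
  refine ⟨h1, ?_⟩
  have hcomm : (∑' y, ∑' x, f x * M x y) = ∑' x, ∑' y, f x * M x y :=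
    Summable.tsum_comm' (f := fun x y => f x * M x y) hprod hslice hcslice
  rw [hcomm]
  calc (∑' x, ∑' y, f x * M x y) ≤ ∑' x, f x := by
        apply Summable.tsum_le_tsum _ hcol hfs
        intro x
        rw [hcol_eq x]
        calc f x * ∑' y, M x y ≤ f x * 1 :=
              mul_le_mul_of_nonneg_left (hM1 x) (hf0 x)
          _ = f x := mul_one _

/-- Basic properties of the row iterates: nonnegativity, summability, mass bound. -/
lemma rowIter_props (ψ : S → ℝ) (M : S → S → ℝ)
    (hψ0 : ∀ y, 0 ≤ ψ y) (hψs : Summable ψ) (hψ1 : ∑' y, ψ y ≤ 1)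
    (hM0 : ∀ x y, 0 ≤ M x y) (hMs : ∀ x, Summable (M x)) (hM1 : ∀ x, ∑' y, M x y ≤ 1) :
    ∀ n, (∀ y, 0 ≤ rowIter ψ M n y) ∧ Summable (rowIter ψ M n) ∧
      (∑' y, rowIter ψ M n y) ≤ 1 := by
  intro n
  induction n with
  | zero => exact ⟨hψ0, hψs, hψ1⟩
  | succ n ih =>
    obtain ⟨h0, hs, h1⟩ := ih
    obtain ⟨hs', hle'⟩ := step_facts (rowIter ψ M n) M h0 hs hM0 hMs hM1
    refine ⟨?_, hs', le_trans hle' h1⟩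
    intro y
    exact tsum_nonneg (fun x => mul_nonneg (h0 x) (hM0 x y))

end Aux

/-- Core estimate of Theorem 5: under A3 with `c₁ < c₂`, the abscissa `θ₁^ψ` is finite
and `θ₂^ψ ≥ θ₁^ψ - log(1 - c₁/c₂)`; in particular `θ₂^ψ > θ₁^ψ`. -/
theorem stmt16 {S : Type*} [Countable S] [Nonempty S] [DecidableEq S]
    (B : S → S → ℝ)
    (hnn : ∀ x y, 0 ≤ B x y)
    (hrow : ∀ x, Summable (fun y => B x y))
    (hsub : ∀ x, ∑' y, B x y ≤ 1)
    (hirr : ∀ x y, ∃ n, 1 ≤ n ∧ 0 < matPow B n x y)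
    (v : S) (c₁ c₂ : ℝ) (hc₁ : 0 < c₁) (hc : c₁ < c₂)
    (hA3 : ∀ x y, c₁ * B v y ≤ B x y ∧ B x y ≤ c₂ * B v y)
    (sv : ℝ) (hsv : sv = ∑' w, B v w)
    (ψ : S → ℝ) (hψ : ∀ y, ψ y = B v y / sv)
    (δ : ℝ) (hδ : δ = c₁ * sv)
    (Bt : S → S → ℝ) (hBt : ∀ x y, Bt x y = B x y - δ * ψ y)
    (θ₁ θ₂ : EReal)
    (hθ₁ : θ₁ = sSup ((fun γ : ℝ => (γ : EReal)) ''
      {γ : ℝ | Summable (fun n : ℕ => Real.exp (γ * (n : ℝ)) * ∑' y, rowIter ψ B n y)}))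
    (hθ₂ : θ₂ = sSup ((fun γ : ℝ => (γ : EReal)) ''
      {γ : ℝ | Summable (fun n : ℕ => Real.exp (γ * (n : ℝ)) * ∑' y, rowIter ψ Bt n y)}))
    :
    θ₁ ≠ ⊥ ∧ θ₁ ≠ ⊤ ∧
    θ₂ ≥ θ₁ - ((Real.log (1 - c₁ / c₂) : ℝ) : EReal) ∧
    θ₁ < θ₂ := by
  have hc₂ : (0:ℝ) < c₂ := hc₁.trans hc
  -- sv > 0
  have hsv0 : 0 ≤ sv := hsv ▸ tsum_nonneg (fun w => hnn v w)
  have hsvpos : 0 < sv := by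
    rcases hsv0.lt_or_eq with h | h
    · exact h
    · exfalso
      have hBv : ∀ w, B v w = 0 := by
        intro w
        have h1 : B v w ≤ ∑' w, B v w := Summable.le_tsum (hrow v) w (fun j _ => hnn v j)
        have h2 : (∑' w, B v w) = 0 := by rw [← hsv, ← h]
        exact le_antisymm (h2 ▸ h1) (hnn v w)
      have hB0 : ∀ x y, B x y = 0 := by
        intro x y
        have := (hA3 x y).2
        rw [hBv y, mul_zero] at this
        exact le_antisymm this (hnn x y)
      obtain ⟨n, hn1, hpos⟩ := hirr v v
      obtain ⟨m, rfl⟩ : ∃ m, n = m + 1 := ⟨n - 1, by omega⟩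
      have : matPow B (m + 1) v v = 0 := by
        show (∑' w, matPow B m v w * B w v) = 0
        simp [hB0]
      rw [this] at hpos
      exact lt_irrefl 0 hpos
  -- ψ facts
  have hψ0 : ∀ y, 0 ≤ ψ y := fun y => (hψ y) ▸ div_nonneg (hnn v y) hsv0
  have hψs : Summable ψ := by
    have := (hrow v).div_const sv
    exact this.congr (fun y => (hψ y).symm)
  have hψsum : (∑' y, ψ y) = 1 := by
    have : (∑' y, ψ y) = (∑' y, B v y) / sv := by
      rw [tsum_congr hψ]; exact tsum_div_const
    rw [this, ← hsv, div_self hsvpos.ne']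
  -- δ > 0
  have hδpos : 0 < δ := hδ ▸ mul_pos hc₁ hsvpos
  -- δ * ψ y = c₁ * B v y
  have hδψ : ∀ y, δ * ψ y = c₁ * B v y := by
    intro y
    rw [hδ, hψ y]
    field_simp
  -- Bt facts
  have hBt' : ∀ x y, Bt x y = B x y - c₁ * B v y := by
    intro x y; rw [hBt x y, hδψ y]
  have hBt0 : ∀ x y, 0 ≤ Bt x y := by
    intro x y; rw [hBt' x y]; linarith [(hA3 x y).1]
  have hBts : ∀ x, Summable (Bt x) := by
    intro x
    exact ((hrow x).sub (hψs.mul_left δ)).congr (fun y => (hBt x y).symm)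
  have hBt1 : ∀ x, ∑' y, Bt x y ≤ 1 := by
    intro x
    have : (∑' y, Bt x y) = (∑' y, B x y) - δ * ∑' y, ψ y := by
      rw [tsum_congr (hBt x), Summable.tsum_sub (hrow x) (hψs.mul_left δ), tsum_mul_left]
    rw [this, hψsum, mul_one]
    have := hsub x
    linarith
  -- the contraction ratio
  set r : ℝ := 1 - c₁ / c₂ with hr
  have hrpos : 0 < r := by
    have : c₁ / c₂ < 1 := (div_lt_one hc₂).mpr hc
    simp [hr]; linarith
  have hrlt1 : r < 1 := by
    have : 0 < c₁ / c₂ := div_pos hc₁ hc₂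
    simp [hr]; linarith
  have hBtr : ∀ x y, Bt x y ≤ r * B x y := by
    intro x y
    rw [hBt' x y, hr]
    have h2 := (hA3 x y).2
    have : (c₁ / c₂) * B x y ≤ c₁ * B v y := by
      rw [div_mul_eq_mul_div, div_le_iff₀ hc₂]
      calc c₁ * B x y ≤ c₁ * (c₂ * B v y) := mul_le_mul_of_nonneg_left h2 hc₁.le
        _ = c₁ * B v y * c₂ := by ring
    linarith
  -- properties of row iterates
  have hψ1 : (∑' y, ψ y) ≤ 1 := le_of_eq hψsum
  have hPB := rowIter_props ψ B hψ0 hψs hψ1 hnn hrow hsub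
  have hPBt := rowIter_props ψ Bt hψ0 hψs hψ1 hBt0 hBts hBt1
  -- entrywise bounds M x y ≤ 1
  have hentB : ∀ x y, B x y ≤ 1 := by
    intro x y
    exact le_trans (Summable.le_tsum (hrow x) y (fun j _ => hnn x j)) (hsub x)
  have hentBt : ∀ x y, Bt x y ≤ 1 := by
    intro x y
    exact le_trans (Summable.le_tsum (hBts x) y (fun j _ => hBt0 x j)) (hBt1 x)
  -- pointwise comparison rowIter Bt ≤ r^n rowIter B
  have hcomp : ∀ n y, rowIter ψ Bt n y ≤ r ^ n * rowIter ψ B n y := by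
    intro n
    induction n with
    | zero => intro y; simp [rowIter]
    | succ n ih =>
      intro y
      show (∑' x, rowIter ψ Bt n x * Bt x y) ≤ r ^ (n + 1) * rowIter ψ B n.succ y
      have hsum1 : Summable (fun x => rowIter ψ Bt n x * Bt x y) := by
        apply Summable.of_nonneg_of_le
          (fun x => mul_nonneg ((hPBt n).1 x) (hBt0 x y)) (fun x => ?_) (hPBt n).2.1
        calc rowIter ψ Bt n x * Bt x y ≤ rowIter ψ Bt n x * 1 :=
              mul_le_mul_of_nonneg_left (hentBt x y) ((hPBt n).1 x)
          _ = rowIter ψ Bt n x := mul_one _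
      have hsum2 : Summable (fun x => r ^ (n + 1) * (rowIter ψ B n x * B x y)) := by
        apply Summable.mul_left
        apply Summable.of_nonneg_of_le
          (fun x => mul_nonneg ((hPB n).1 x) (hnn x y)) (fun x => ?_) (hPB n).2.1
        calc rowIter ψ B n x * B x y ≤ rowIter ψ B n x * 1 :=
              mul_le_mul_of_nonneg_left (hentB x y) ((hPB n).1 x)
          _ = rowIter ψ B n x := mul_one _
      have hle : ∀ x, rowIter ψ Bt n x * Bt x y ≤ r ^ (n + 1) * (rowIter ψ B n x * B x y) := by
        intro x
        calc rowIter ψ Bt n x * Bt x y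
            ≤ (r ^ n * rowIter ψ B n x) * (r * B x y) := by
              apply mul_le_mul (ih x) (hBtr x y) (hBt0 x y)
              exact mul_nonneg (pow_nonneg hrpos.le n) ((hPB n).1 x)
          _ = r ^ (n + 1) * (rowIter ψ B n x * B x y) := by ring
      calc (∑' x, rowIter ψ Bt n x * Bt x y)
          ≤ ∑' x, r ^ (n + 1) * (rowIter ψ B n x * B x y) := Summable.tsum_le_tsum hle hsum1 hsum2
        _ = r ^ (n + 1) * ∑' x, rowIter ψ B n x * B x y := tsum_mul_left
        _ = r ^ (n + 1) * rowIter ψ B n.succ y := rfl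
  -- tsum comparison b n ≤ r^n * a n
  set a : ℕ → ℝ := fun n => ∑' y, rowIter ψ B n y with ha
  set b : ℕ → ℝ := fun n => ∑' y, rowIter ψ Bt n y with hb
  have ha0 : ∀ n, 0 ≤ a n := fun n => tsum_nonneg (fun y => (hPB n).1 y)
  have hb0 : ∀ n, 0 ≤ b n := fun n => tsum_nonneg (fun y => (hPBt n).1 y)
  have ha1 : ∀ n, a n ≤ 1 := fun n => (hPB n).2.2
  have hbra : ∀ n, b n ≤ r ^ n * a n := by
    intro n
    calc b n ≤ ∑' y, r ^ n * rowIter ψ B n y :=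
          Summable.tsum_le_tsum (hcomp n) (hPBt n).2.1 ((hPB n).2.1.mul_left _)
      _ = r ^ n * a n := tsum_mul_left
  -- lower bound a n ≥ δ^n
  have halow : ∀ n, δ ^ n ≤ a n := by
    intro n
    induction n with
    | zero => simp [ha, rowIter, hψsum]
    | succ n ih =>
      have hpt : ∀ y, δ * ψ y * a n ≤ rowIter ψ B (n + 1) y := by
        intro y
        show δ * ψ y * a n ≤ ∑' x, rowIter ψ B n x * B x y
        have h1 : ∀ x, rowIter ψ B n x * (c₁ * B v y) ≤ rowIter ψ B n x * B x y := by
          intro x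
          exact mul_le_mul_of_nonneg_left (hA3 x y).1 ((hPB n).1 x)
        have hs1 : Summable (fun x => rowIter ψ B n x * (c₁ * B v y)) :=
          (hPB n).2.1.mul_right _
        have hs2 : Summable (fun x => rowIter ψ B n x * B x y) := by
          apply Summable.of_nonneg_of_le
            (fun x => mul_nonneg ((hPB n).1 x) (hnn x y)) (fun x => ?_) (hPB n).2.1
          calc rowIter ψ B n x * B x y ≤ rowIter ψ B n x * 1 :=
                mul_le_mul_of_nonneg_left (hentB x y) ((hPB n).1 x)
            _ = rowIter ψ B n x := mul_one _
        calc δ * ψ y * a n = (c₁ * B v y) * a n := by rw [hδψ y]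
          _ = ∑' x, rowIter ψ B n x * (c₁ * B v y) := by
              rw [tsum_mul_right]; ring
          _ ≤ ∑' x, rowIter ψ B n x * B x y := Summable.tsum_le_tsum h1 hs1 hs2
      have hsl : Summable (fun y => δ * ψ y * a n) := by
        have := (hψs.mul_left δ).mul_right (a n)
        exact this.congr (fun y => rfl)
      have : (∑' y, δ * ψ y * a n) ≤ a (n + 1) :=
        Summable.tsum_le_tsum hpt hsl (hPB (n + 1)).2.1
      have heq : (∑' y, δ * ψ y * a n) = δ * a n := by
        calc (∑' y, δ * ψ y * a n) = ∑' y, δ * a n * ψ y := by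
              apply tsum_congr; intro y; ring
          _ = δ * a n * ∑' y, ψ y := tsum_mul_left
          _ = δ * a n := by rw [hψsum, mul_one]
      calc δ ^ (n + 1) = δ * δ ^ n := by ring
        _ ≤ δ * a n := mul_le_mul_of_nonneg_left ih hδpos.le
        _ ≤ a (n + 1) := heq ▸ this
  -- θ₁ ≠ ⊥ : −1 is in the set
  set L : ℝ := Real.log r with hL
  have hLneg : L < 0 := Real.log_neg hrpos hrlt1
  have hmem1 : ((-1 : ℝ)) ∈ {γ : ℝ | Summable
      (fun n : ℕ => Real.exp (γ * (n : ℝ)) * ∑' y, rowIter ψ B n y)} := by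
    show Summable (fun n : ℕ => Real.exp ((-1) * (n : ℝ)) * a n)
    apply Summable.of_nonneg_of_le
      (fun n => mul_nonneg (Real.exp_nonneg _) (ha0 n)) (fun n => ?_)
      (summable_geometric_of_lt_one (Real.exp_nonneg _)
        (Real.exp_lt_one_iff.mpr (by norm_num)) : Summable fun n : ℕ => Real.exp (-1) ^ n)
    calc Real.exp ((-1) * (n : ℝ)) * a n ≤ Real.exp ((-1) * (n : ℝ)) * 1 :=
          mul_le_mul_of_nonneg_left (ha1 n) (Real.exp_nonneg _)
      _ = Real.exp ((n : ℝ) * (-1)) := by rw [mul_one, mul_comm]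
      _ = Real.exp (-1) ^ n := Real.exp_nat_mul _ n
  have hθ₁bot : ((-1 : ℝ) : EReal) ≤ θ₁ := by
    rw [hθ₁]
    exact le_sSup ⟨-1, hmem1, rfl⟩
  have hθ₁ne_bot : θ₁ ≠ ⊥ := by
    intro h
    rw [h] at hθ₁bot
    exact (EReal.bot_lt_coe (-1)).not_ge hθ₁bot
  -- θ₁ ≤ -log δ
  have hγbound : ∀ γ : ℝ, Summable (fun n : ℕ => Real.exp (γ * (n : ℝ)) * a n) →
      γ ≤ -Real.log δ := by
    intro γ hγ
    by_contra hlt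
    push_neg at hlt
    have hterm : ∀ n : ℕ, (1 : ℝ) ≤ Real.exp (γ * (n : ℝ)) * a n := by
      intro n
      have h1 : Real.exp (Real.log δ * (n : ℝ)) = δ ^ n := by
        rw [mul_comm, Real.exp_nat_mul, Real.exp_log hδpos]
      have h2 : Real.exp (γ * n) * δ ^ n ≤ Real.exp (γ * n) * a n :=
        mul_le_mul_of_nonneg_left (halow n) (Real.exp_nonneg _)
      have h3 : Real.exp (γ * n) * δ ^ n = Real.exp ((γ + Real.log δ) * n) := by
        rw [← h1, ← Real.exp_add]; ring_nf
      have h4 : (0:ℝ) ≤ (γ + Real.log δ) * n := by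
        apply mul_nonneg _ (Nat.cast_nonneg n)
        linarith
      calc (1:ℝ) = Real.exp 0 := (Real.exp_zero).symm
        _ ≤ Real.exp ((γ + Real.log δ) * n) := Real.exp_le_exp.mpr h4
        _ = Real.exp (γ * n) * δ ^ n := h3.symm
        _ ≤ Real.exp (γ * n) * a n := h2
    have htend := hγ.tendsto_atTop_zero
    have hev : ∀ᶠ n : ℕ in Filter.atTop,
        Real.exp (γ * (n : ℝ)) * a n < 1 :=
      htend.eventually_lt_const one_pos
    obtain ⟨n, hn⟩ := hev.exists
    exact absurd (hterm n) (not_le.mpr hn)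
  have hθ₁top : θ₁ ≤ ((-Real.log δ : ℝ) : EReal) := by
    rw [hθ₁]
    apply sSup_le
    rintro x ⟨γ, hγ, rfl⟩
    exact EReal.coe_le_coe_iff.mpr (hγbound γ hγ)
  have hθ₁ne_top : θ₁ ≠ ⊤ := by
    intro h
    rw [h] at hθ₁top
    exact (EReal.coe_lt_top _).not_ge hθ₁top
  -- membership transfer
  have htrans : ∀ γ : ℝ, Summable (fun n : ℕ => Real.exp (γ * (n : ℝ)) * a n) →
      Summable (fun n : ℕ => Real.exp ((γ - L) * (n : ℝ)) * b n) := by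
    intro γ hγ
    apply Summable.of_nonneg_of_le
      (fun n => mul_nonneg (Real.exp_nonneg _) (hb0 n)) (fun n => ?_) hγ
    have h1 : Real.exp ((γ - L) * (n : ℝ)) * (r ^ n) = Real.exp (γ * n) := by
      have : (r : ℝ) ^ n = Real.exp (L * n) := by
        rw [mul_comm, Real.exp_nat_mul, Real.exp_log hrpos]
      rw [this, ← Real.exp_add]; ring_nf
    calc Real.exp ((γ - L) * (n : ℝ)) * b n
        ≤ Real.exp ((γ - L) * (n : ℝ)) * (r ^ n * a n) :=
          mul_le_mul_of_nonneg_left (hbra n) (Real.exp_nonneg _)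
      _ = (Real.exp ((γ - L) * (n : ℝ)) * r ^ n) * a n := by ring
      _ = Real.exp (γ * n) * a n := by rw [h1]
  -- θ₂ ≥ θ₁ − L
  have hmain : θ₁ ≤ θ₂ + (L : EReal) := by
    rw [hθ₁]
    apply sSup_le
    rintro x ⟨γ, hγ, rfl⟩
    have hmem2 : ((γ - L : ℝ) : EReal) ≤ θ₂ := by
      rw [hθ₂]
      exact le_sSup ⟨γ - L, htrans γ hγ, rfl⟩
    calc ((γ : ℝ) : EReal) = ((γ - L : ℝ) : EReal) + (L : EReal) := by
          rw [← EReal.coe_add]; norm_num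
      _ ≤ θ₂ + (L : EReal) := add_le_add_left hmem2 _
  have hgoal3 : θ₁ - (L : EReal) ≤ θ₂ := EReal.sub_le_of_le_add hmain
  -- θ₁ < θ₂
  have hgoal4 : θ₁ < θ₂ := by
    lift θ₁ to ℝ using ⟨hθ₁ne_top, hθ₁ne_bot⟩ with t
    calc (t : EReal) < ((t - L : ℝ) : EReal) := by
          apply EReal.coe_lt_coe_iff.mpr; linarith
      _ = (t : EReal) - (L : EReal) := EReal.coe_sub t L
      _ ≤ θ₂ := hgoal3
  exact ⟨hθ₁ne_bot, hθ₁ne_top, hgoal3, hgoal4⟩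
end
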